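/- Let M ≥ 3, let π ∈ B_M be an M-bounded triangular ladder, and let yz be an outer boundary edge of L_π. Then the backward extension graph B_{π,yz} is balanced, i.e. m_{B_{π,yz}} ≥ m_K for every subextension K of B_{π,yz}. -/

import Mathlib

noncomputable section

namespace TriangleRemoval

/-- The alphabet `{e, 0, 1}` of triangular-ladder words. -/
inductive Sym : Type
  | e : Sym
  | zero : Sym
  | one : Sym
deriving DecidableEq

/-- `nth π j` is the `j`-th symbol of `π` (1-based), if it exists. -/
def nth (π : List Sym) (j : ℕ) : Option Sym :=
  if j = 0 then none else π[j - 1]?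

/-- One construction step of a triangular ladder. The state is
`(k, o, E)`: the last vertex `k`, the backward neighbor `o` of `k` other than `k - 1`
(junk if the last symbol was `e`), and the current edge set `E`. -/
def ladderStep : ℕ × ℕ × Set (Sym2 ℕ) → Sym → ℕ × ℕ × Set (Sym2 ℕ)
  | (k, _, E), Sym.one => (k + 1, k - 1, insert s(k - 1, k + 1) (insert s(k, k + 1) E))
  | (k, o, E), Sym.zero => (k + 1, o, insert s(o, k + 1) (insert s(k, k + 1) E))
  | (k, _, E), Sym.e => (k + 1, 0, insert s(k, k + 1) E)

/-- The initial state of the construction, according to the first symbol: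
`L_1` has edges `{02, 12}`, `L_e` has the single edge `12`. -/
def ladderInit : Sym → ℕ × ℕ × Set (Sym2 ℕ)
  | Sym.one => (2, 0, {s(0, 2), s(1, 2)})
  | _ => (2, 0, {s(1, 2)})

/-- The data of the triangular ladder built from the word `π`. -/
def ladderData : List Sym → ℕ × ℕ × Set (Sym2 ℕ)
  | [] => (1, 0, ∅)
  | a :: rest => rest.foldl ladderStep (ladderInit a)

/-- The triangular ladder `L_π`, a graph on `{0, 1, …, |π|+1} ⊆ ℕ`. -/
def ladder (π : List Sym) : SimpleGraph ℕ :=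
  SimpleGraph.fromEdgeSet (ladderData π).2.2

/-- `L_π` has an `f`-fan at the vertex `a > 0`. -/
def hasFanAt (π : List Sym) (f a : ℕ) : Prop :=
  0 < a ∧
    ((nth π (a - 2) ≠ some Sym.e ∧
        ∀ b ∈ Finset.Icc (a + 1) (a + f + 1), (ladder π).Adj a b) ∨
     (nth π (a - 2) = some Sym.e ∧ (ladder π).Adj a (a - 1) ∧
        ∀ b ∈ Finset.Icc (a + 1) (a + f), (ladder π).Adj a b))

/-- `L_π` contains an `f`-fan. -/
def hasFan (π : List Sym) (f : ℕ) : Prop := ∃ a, hasFanAt π f a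

/-- Membership in `Π`: no `0` in positions 1 or 2, at most two occurrences of `e`, and
no substrings `e0`, `e10`, `e1e`. -/
def memPi (π : List Sym) : Prop :=
  nth π 1 ≠ some Sym.zero ∧ nth π 2 ≠ some Sym.zero ∧ π.count Sym.e ≤ 2 ∧
    ¬ [Sym.e, Sym.zero] <:+: π ∧ ¬ [Sym.e, Sym.one, Sym.zero] <:+: π ∧
    ¬ [Sym.e, Sym.one, Sym.e] <:+: π

/-- Membership in `B_M`: `π ∈ Π` is nonempty, contains no `M`-fan, and satisfies the
length restrictions according to the number of occurrences of `e`. -/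
def memB (M : ℕ) (π : List Sym) : Prop :=
  memPi π ∧ π ≠ [] ∧ ¬ hasFan π M ∧
    ((π.count Sym.e = 0 ∧ π.length ≤ 3 * M - 1) ∨
     (π.count Sym.e = 1 ∧ π.length ≤ 2 * M ∧ nth π (2 * M) ≠ some Sym.e) ∨
     (π.count Sym.e = 2 ∧ π.length ≤ M + 1 ∧ nth π (M + 1) ≠ some Sym.e))

/-- `π' = π_{z-1} ∘ 0` if `y < z-1` and `π' = π_{z-1} ∘ 1` if `y = z-1`. -/
def boundaryWord (π : List Sym) (y z : ℕ) : List Sym :=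
  π.take (z - 1) ++ [if y < z - 1 then Sym.zero else Sym.one]

/-- `yz` is a boundary edge of `L_π` with respect to `B_M`. -/
def IsBoundaryEdge (M : ℕ) (π : List Sym) (y z : ℕ) : Prop :=
  0 < y ∧ y < z ∧ (ladder π).Adj y z ∧ nth π y ≠ some Sym.e ∧
    ¬ memB M (boundaryWord π y z)

/-- `yz` is an outer boundary edge of `L_π` with respect to `B_M`. -/
def IsOuterBoundaryEdge (M : ℕ) (π : List Sym) (y z : ℕ) : Prop :=
  IsBoundaryEdge M π y z ∧ z = π.length + 1 ∧
    ((π.count Sym.e = 0 ∧ π.length = 3 * M - 1) ∨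
     (π.count Sym.e = 1 ∧ π.length = 2 * M) ∨
     (π.count Sym.e = 2 ∧ π.length = M + 1))

/-- `yz` is a side boundary edge of `L_π` with respect to `B_M`. -/
def IsSideBoundaryEdge (M : ℕ) (π : List Sym) (y z : ℕ) : Prop :=
  IsBoundaryEdge M π y z ∧ ¬ IsOuterBoundaryEdge M π y z

/-- The edge set of the backward extension `B_{π,yz}`: the edges of `L_π` minus the
edges with both endpoints in the distinguished set `I = {0, 1, y, z}`. -/
def backEdges (π : List Sym) (y z : ℕ) : Set (Sym2 ℕ) :=
  (ladder π).edgeSet \ {e | ∀ x ∈ e, x ∈ ({0, 1, y, z} : Finset ℕ)}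


open List Finset

/-! ### Basic facts about `nth` -/

lemma nth_pos {π : List Sym} {j : ℕ} (hj : 1 ≤ j) : nth π j = π[j-1]? := by
  unfold nth; rw [if_neg (by omega)]

lemma nth_some {π : List Sym} {j : ℕ} {x : Sym} (h : nth π j = some x) :
    1 ≤ j ∧ j ≤ π.length := by
  unfold nth at h
  by_cases hj : j = 0
  · simp [hj] at h
  · rw [if_neg hj] at h
    obtain ⟨h1, -⟩ := List.getElem?_eq_some_iff.mp h
    omega

lemma nth_isSome {π : List Sym} {j : ℕ} (h1 : 1 ≤ j) (h2 : j ≤ π.length) :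
    ∃ x, nth π j = some x := by
  rw [nth_pos h1]
  have : j - 1 < π.length := by omega
  exact ⟨π[j-1], List.getElem?_eq_some_iff.mpr ⟨this, rfl⟩⟩

lemma nth_append₁ {π : List Sym} {j : ℕ} (hj : 1 ≤ j) (h : j ≤ π.length) (l : List Sym) :
    nth (π ++ l) j = nth π j := by
  rw [nth_pos hj, nth_pos hj, List.getElem?_append_left (by omega)]

lemma nth_snoc_last {π : List Sym} (x : Sym) : nth (π ++ [x]) (π.length + 1) = some x := by
  rw [nth_pos (by omega)]
  have h1 : π.length + 1 - 1 = π.length := by omega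
  rw [h1, List.getElem?_append_right (le_refl _)]
  simp

lemma nth_take {π : List Sym} {i m : ℕ} (hi : 1 ≤ i) (him : i ≤ m) :
    nth (π.take m) i = nth π i := by
  rw [nth_pos hi, nth_pos hi, List.getElem?_take_of_lt (by omega)]

/-! ### Infix extraction and forced-symbol lemmas -/

lemma infix_pair {l : List Sym} {p : ℕ} {x y : Sym}
    (h1 : l[p]? = some x) (h2 : l[p+1]? = some y) : [x, y] <:+: l := by
  induction l generalizing p with
  | nil => simp at h1
  | cons a t ih =>
    cases p with
    | zero =>
      simp at h1 h2
      subst h1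
      obtain ⟨t', ht⟩ : ∃ t', t = y :: t' := by
        cases t with
        | nil => simp at h2
        | cons b t' => simp at h2; exact ⟨t', by rw [h2]⟩
      rw [ht]
      exact ⟨[], t', rfl⟩
    | succ q =>
      simp only [List.getElem?_cons_succ] at h1 h2
      exact ((ih h1 h2).trans (List.suffix_cons a t).isInfix : _)

lemma infix_triple {l : List Sym} {p : ℕ} {x y z : Sym}
    (h1 : l[p]? = some x) (h2 : l[p+1]? = some y) (h3 : l[p+2]? = some z) :
    [x, y, z] <:+: l := by
  induction l generalizing p with
  | nil => simp at h1
  | cons a t ih =>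
    cases p with
    | zero =>
      simp at h1
      subst h1
      simp only [List.getElem?_cons_succ] at h2 h3
      obtain ⟨t', ht⟩ : ∃ t', t = y :: t' := by
        cases t with
        | nil => simp at h2
        | cons b t' => simp at h2; exact ⟨t', by rw [h2]⟩
      subst ht
      simp only [List.getElem?_cons_succ] at h3
      obtain ⟨t'', ht'⟩ : ∃ t'', t' = z :: t'' := by
        cases t' with
        | nil => simp at h3
        | cons c t'' => simp at h3; exact ⟨t'', by rw [h3]⟩
      subst ht'
      exact ⟨[], t'', rfl⟩
    | succ q =>
      simp only [List.getElem?_cons_succ] at h1 h2 h3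
      exact ((ih h1 h2 h3).trans (List.suffix_cons a t).isInfix : _)

lemma nth_infix_pair {π : List Sym} {p : ℕ} {x y : Sym} (hp : 1 ≤ p)
    (h1 : nth π p = some x) (h2 : nth π (p+1) = some y) : [x, y] <:+: π := by
  rw [nth_pos hp] at h1
  rw [nth_pos (by omega)] at h2
  have : p + 1 - 1 = (p - 1) + 1 := by omega
  rw [this] at h2
  exact infix_pair h1 h2

lemma nth_infix_triple {π : List Sym} {p : ℕ} {x y z : Sym} (hp : 1 ≤ p)
    (h1 : nth π p = some x) (h2 : nth π (p+1) = some y) (h3 : nth π (p+2) = some z) :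
    [x, y, z] <:+: π := by
  rw [nth_pos hp] at h1
  rw [nth_pos (by omega)] at h2
  rw [nth_pos (by omega)] at h3
  have e2 : p + 1 - 1 = (p - 1) + 1 := by omega
  have e3 : p + 2 - 1 = (p - 1) + 2 := by omega
  rw [e2] at h2; rw [e3] at h3
  exact infix_triple h1 h2 h3

/-- Positional count of `e`'s equals `List.count`. -/
lemma count_e_eq (π : List Sym) :
    ((Finset.Icc 1 π.length).filter (fun j => nth π j = some Sym.e)).card
      = π.count Sym.e := by
  induction π using List.reverseRecOn with
  | nil => simp
  | append_singleton l x ih =>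
    have hlen : (l ++ [x]).length = l.length + 1 := by simp
    have hsplit : Finset.Icc 1 (l.length + 1) = insert (l.length + 1) (Finset.Icc 1 l.length) := by
      ext i; simp [Finset.mem_Icc, Finset.mem_insert]; omega
    rw [hlen, hsplit, Finset.filter_insert]
    have hagree : ∀ j ∈ Finset.Icc 1 l.length,
        (nth (l ++ [x]) j = some Sym.e) = (nth l j = some Sym.e) := by
      intro j hj
      rw [Finset.mem_Icc] at hj
      rw [nth_append₁ hj.1 hj.2]
    rw [Finset.filter_congr (fun j hj => by rw [hagree j hj])]
    rw [List.count_append]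
    by_cases hx : x = Sym.e
    · subst hx
      rw [if_pos (nth_snoc_last _)]
      rw [Finset.card_insert_of_notMem (by simp [Finset.mem_filter, Finset.mem_Icc])]
      simp [ih]
    · rw [if_neg (by rw [nth_snoc_last]; simp [hx])]
      have : List.count Sym.e [x] = 0 := by
        simp [List.count_singleton]
        intro h; exact absurd h hx
      rw [ih, this]
      omega

/-- If a finset of positions all carry `e`, its size is at most the `e`-count. -/
lemma card_le_count {π : List Sym} (S : Finset ℕ)
    (hS : ∀ p ∈ S, nth π p = some Sym.e) : S.card ≤ π.count Sym.e := by
  rw [← count_e_eq]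
  apply Finset.card_le_card
  intro p hp
  have h := hS p hp
  have hb := nth_some h
  simp [Finset.mem_filter, Finset.mem_Icc]
  exact ⟨⟨hb.1, hb.2⟩, h⟩

/-- After an `e` there is no `0`. -/
lemma no_e0 {π : List Sym} (hP : memPi π) {p : ℕ}
    (h1 : nth π p = some Sym.e) : nth π (p+1) ≠ some Sym.zero := by
  intro h2
  exact hP.2.2.2.1 (nth_infix_pair (nth_some h1).1 h1 h2)

/-- After `e1` the next symbol (if any) is `1`. -/
lemma e1_forces {π : List Sym} (hP : memPi π) {p : ℕ}
    (h1 : nth π p = some Sym.e) (h2 : nth π (p+1) = some Sym.one)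
    (h3 : p + 2 ≤ π.length) : nth π (p+2) = some Sym.one := by
  obtain ⟨x, hx⟩ := nth_isSome (j := p+2) (by omega) h3
  cases x with
  | one => exact hx
  | zero => exact absurd (nth_infix_triple (nth_some h1).1 h1 h2 hx) hP.2.2.2.2.1
  | e => exact absurd (nth_infix_triple (nth_some h1).1 h1 h2 hx) hP.2.2.2.2.2

/-- After `ee` the next symbol (if any) is `1`. -/
lemma ee_forces {π : List Sym} (hP : memPi π) {p : ℕ}
    (h1 : nth π p = some Sym.e) (h2 : nth π (p+1) = some Sym.e)
    (h3 : p + 2 ≤ π.length) : nth π (p+2) = some Sym.one := by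
  obtain ⟨x, hx⟩ := nth_isSome (j := p+2) (by omega) h3
  cases x with
  | one => exact hx
  | zero => exact absurd hx (no_e0 hP h2)
  | e =>
    have h4 : ({p, p+1, p+2} : Finset ℕ).card ≤ π.count Sym.e := by
      apply card_le_count
      intro q hq
      simp [Finset.mem_insert] at hq
      rcases hq with rfl | rfl | rfl
      exacts [h1, h2, hx]
    have h5 : ({p, p+1, p+2} : Finset ℕ).card = 3 := by
      rw [Finset.card_insert_of_notMem (by simp),
        Finset.card_insert_of_notMem (by simp), Finset.card_singleton]
    have h6 := hP.2.2.1
    omega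

lemma three_e {π : List Sym} (hP : memPi π) {p q t : ℕ}
    (h1 : nth π p = some Sym.e) (h2 : nth π q = some Sym.e) (h3 : nth π t = some Sym.e)
    (hpq : p ≠ q) (hpt : p ≠ t) (hqt : q ≠ t) : False := by
  have h4 : ({p, q, t} : Finset ℕ).card ≤ π.count Sym.e := by
    apply card_le_count
    intro i hi
    simp [Finset.mem_insert] at hi
    rcases hi with rfl | rfl | rfl
    exacts [h1, h2, h3]
  have h5 : ({p, q, t} : Finset ℕ).card = 3 := by
    rw [Finset.card_insert_of_notMem (by simp [hpq, hpt]),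
      Finset.card_insert_of_notMem (by simp [hqt]), Finset.card_singleton]
  have := hP.2.2.1
  omega

lemma two_e {π : List Sym} {p q : ℕ}
    (h1 : nth π p = some Sym.e) (h2 : nth π q = some Sym.e) (hpq : p ≠ q) :
    2 ≤ π.count Sym.e := by
  have h4 : ({p, q} : Finset ℕ).card ≤ π.count Sym.e := by
    apply card_le_count
    intro i hi
    simp [Finset.mem_insert] at hi
    rcases hi with rfl | rfl
    exacts [h1, h2]
  have h5 : ({p, q} : Finset ℕ).card = 2 := by
    rw [Finset.card_insert_of_notMem (by simp [hpq]), Finset.card_singleton]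
  omega

/-! ### Structure of `ladderData` -/

def oAt (π : List Sym) : ℕ := (ladderData π).2.1

lemma ladderData_snoc {π : List Sym} (σ : Sym) (hne : π ≠ []) :
    ladderData (π ++ [σ]) = ladderStep (ladderData π) σ := by
  obtain ⟨a, t, rfl⟩ := List.exists_cons_of_ne_nil hne
  show ((t ++ [σ]).foldl ladderStep (ladderInit a)) = _
  rw [List.foldl_append]
  rfl

lemma ladderData_singleton (σ : Sym) : ladderData [σ] = ladderInit σ := by
  cases σ <;> rfl

lemma ladderData_fst {π : List Sym} (hne : π ≠ []) : (ladderData π).1 = π.length + 1 := by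
  induction π using List.reverseRecOn with
  | nil => simp at hne
  | append_singleton l x ih =>
    rcases eq_or_ne l [] with rfl | hl
    · cases x <;> simp [ladderData_singleton, ladderInit]
    · rw [ladderData_snoc _ hl]
      rcases hld : ladderData l with ⟨k, o, E⟩
      have hk : k = l.length + 1 := by have := ih hl; rw [hld] at this; exact this
      cases x <;> simp [ladderStep, hk]

lemma oAt_nil : oAt [] = 0 := rfl

lemma oAt_singleton (σ : Sym) : oAt [σ] = 0 := by
  cases σ <;> rfl

lemma oAt_snoc_one {π : List Sym} (hne : π ≠ []) : oAt (π ++ [Sym.one]) = π.length := by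
  unfold oAt
  rw [ladderData_snoc _ hne]
  rcases hld : ladderData π with ⟨k, o, E⟩
  have hk : k = π.length + 1 := by have := ladderData_fst hne; rw [hld] at this; exact this
  simp [ladderStep, hk]

lemma oAt_snoc_zero {π : List Sym} (hne : π ≠ []) : oAt (π ++ [Sym.zero]) = oAt π := by
  unfold oAt
  rw [ladderData_snoc _ hne]
  rcases hld : ladderData π with ⟨k, o, E⟩
  simp [ladderStep]

lemma oAt_snoc_e {π : List Sym} (hne : π ≠ []) : oAt (π ++ [Sym.e]) = 0 := by
  unfold oAt
  rw [ladderData_snoc _ hne]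
  rcases hld : ladderData π with ⟨k, o, E⟩
  simp [ladderStep]

lemma oAt_le {π : List Sym} : oAt π ≤ π.length - 1 := by
  induction π using List.reverseRecOn with
  | nil => simp [oAt_nil]
  | append_singleton l x ih =>
    rcases eq_or_ne l [] with rfl | hl
    · simp [oAt_singleton]
    · have hlen : (l ++ [x]).length = l.length + 1 := by simp
      have h1 : 1 ≤ l.length := List.length_pos_iff.mpr hl
      cases x
      · rw [oAt_snoc_e hl]; omega
      · rw [oAt_snoc_zero hl]; omega
      · rw [oAt_snoc_one hl]; omega

/-- `oAt` of a prefix ending right after position `m` carrying symbol `σ`. -/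
lemma oAt_take_succ {π : List Sym} {m : ℕ} {σ : Sym} (hm : 2 ≤ m)
    (hσ : nth π m = some σ) :
    oAt (π.take m) = (match σ with
      | Sym.one => m - 1
      | Sym.zero => oAt (π.take (m-1))
      | Sym.e => 0) := by
  have hmn : m ≤ π.length := (nth_some hσ).2
  have hsplit : π.take m = π.take (m-1) ++ [σ] := by
    have h1 : m = (m-1) + 1 := by omega
    rw [h1, List.take_succ]
    congr 1
    have : π[m-1]? = some σ := by rw [← nth_pos (by omega)]; exact hσ
    rw [this]; rfl
  have hne : π.take (m-1) ≠ [] := by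
    have : (π.take (m-1)).length = m - 1 := by
      rw [List.length_take]; omega
    intro h; rw [h] at this; simp at this; omega
  have hlen : (π.take (m-1)).length = m - 1 := by rw [List.length_take]; omega
  rw [hsplit]
  cases σ
  · rw [oAt_snoc_e hne]
  · rw [oAt_snoc_zero hne]
  · rw [oAt_snoc_one hne, hlen]

/-! ### Explicit description of the edges of `L_π` -/

def bot (π : List Sym) (j : ℕ) : ℕ :=
  if nth π j = some Sym.one then j - 1 else oAt (π.take (j - 1))

def extraOK (π : List Sym) (j : ℕ) : Prop :=
  1 ≤ j ∧ j ≤ π.length ∧ nth π j ≠ some Sym.e ∧ (j = 1 → nth π 1 = some Sym.one)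

def ESpec (π : List Sym) : Set (Sym2 ℕ) :=
  {x | ∃ j, 1 ≤ j ∧ j ≤ π.length ∧ x = s(j, j + 1)} ∪
    {x | ∃ j, extraOK π j ∧ x = s(bot π j, j + 1)}

lemma bot_append {l : List Sym} {σ : Sym} {j : ℕ} (h1 : 1 ≤ j) (h2 : j ≤ l.length) :
    bot (l ++ [σ]) j = bot l j := by
  unfold bot
  rw [nth_append₁ h1 h2, List.take_append_of_le_length (by omega)]

lemma extraOK_append {l : List Sym} {σ : Sym} {j : ℕ} (h2 : j ≤ l.length) :
    extraOK (l ++ [σ]) j ↔ extraOK l j := by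
  unfold extraOK
  constructor
  · rintro ⟨a, b, c, d⟩
    rw [nth_append₁ a h2] at c
    refine ⟨a, h2, c, fun hj => ?_⟩
    have := d hj
    rwa [nth_append₁ (by omega) (by omega)] at this
  · rintro ⟨a, b, c, d⟩
    refine ⟨a, by simp; omega, ?_, fun hj => ?_⟩
    · rwa [nth_append₁ a h2]
    · rw [nth_append₁ (by omega) (by omega)]
      exact d hj

lemma edges_eq (π : List Sym) : (ladderData π).2.2 = ESpec π := by
  induction π using List.reverseRecOn with
  | nil =>
    show (∅ : Set (Sym2 ℕ)) = _
    unfold ESpec extraOK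
    ext x
    simp only [Set.mem_empty_iff_false, Set.mem_union, Set.mem_setOf_eq, List.length_nil]
    constructor
    · intro h; exact h.elim
    · rintro (⟨j, h1, h2, -⟩ | ⟨j, ⟨h1, h2, -⟩, -⟩) <;> omega
  | append_singleton l σ ih =>
    rcases eq_or_ne l [] with rfl | hl
    · -- singleton case
      have hn1e : nth ([Sym.e] : List Sym) 1 = some Sym.e := by rw [nth_pos (by omega)]; rfl
      have hn1z : nth ([Sym.zero] : List Sym) 1 = some Sym.zero := by rw [nth_pos (by omega)]; rfl
      have hn1o : nth ([Sym.one] : List Sym) 1 = some Sym.one := by rw [nth_pos (by omega)]; rfl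
      cases σ
      · ext x
        show x ∈ ({s(1, 2)} : Set (Sym2 ℕ)) ↔ _
        unfold ESpec extraOK
        simp only [Set.mem_singleton_iff, Set.mem_union, Set.mem_setOf_eq,
          List.nil_append, List.length_singleton]
        constructor
        · rintro rfl; left; exact ⟨1, by omega, by omega, rfl⟩
        · rintro (⟨j, h1, h2, h3⟩ | ⟨j, ⟨h1, h2, h3, h4⟩, h5⟩)
          · have hj : j = 1 := by omega
            subst hj; exact h3
          · have hj : j = 1 := by omega
            subst hj; rw [hn1e] at h3; exact absurd rfl h3
      · ext x
        show x ∈ ({s(1, 2)} : Set (Sym2 ℕ)) ↔ _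
        unfold ESpec extraOK
        simp only [Set.mem_singleton_iff, Set.mem_union, Set.mem_setOf_eq,
          List.nil_append, List.length_singleton]
        constructor
        · rintro rfl; left; exact ⟨1, by omega, by omega, rfl⟩
        · rintro (⟨j, h1, h2, h3⟩ | ⟨j, ⟨h1, h2, h3, h4⟩, h5⟩)
          · have hj : j = 1 := by omega
            subst hj; exact h3
          · have hj : j = 1 := by omega
            subst hj; rw [hn1z] at h4; simp at h4
      · ext x
        show x ∈ ({s(0, 2), s(1, 2)} : Set (Sym2 ℕ)) ↔ _
        unfold ESpec extraOK
        simp only [Set.mem_insert_iff, Set.mem_singleton_iff, Set.mem_union, Set.mem_setOf_eq,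
          List.nil_append, List.length_singleton]
        have hbot : bot [Sym.one] 1 = 0 := by unfold bot; rw [hn1o]; simp
        constructor
        · rintro (rfl | rfl)
          · right
            refine ⟨1, ⟨by omega, by omega, by rw [hn1o]; simp, fun _ => hn1o⟩, ?_⟩
            rw [hbot]
          · left; exact ⟨1, by omega, by omega, rfl⟩
        · rintro (⟨j, h1, h2, h3⟩ | ⟨j, ⟨h1, h2, h3, h4⟩, h5⟩)
          · have hj : j = 1 := by omega
            subst hj; right; exact h3
          · have hj : j = 1 := by omega
            subst hj; left; rw [h5, hbot]
    · -- snoc case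
      have hL : 1 ≤ l.length := List.length_pos_iff.mpr hl
      rw [ladderData_snoc _ hl]
      rcases hld : ladderData l with ⟨k, o, E⟩
      have hk : k = l.length + 1 := by have := ladderData_fst hl; rw [hld] at this; exact this
      have hE : E = ESpec l := by rw [← ih, hld]
      have ho : o = oAt l := by unfold oAt; rw [hld]
      have hlen : (l ++ [σ]).length = l.length + 1 := by simp
      have hlast : nth (l ++ [σ]) (l.length + 1) = some σ := nth_snoc_last σ
      have hbotlast : bot (l ++ [σ]) (l.length + 1)
          = (if σ = Sym.one then l.length else oAt l) := by
        unfold bot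
        rw [hlast]
        by_cases hσ : σ = Sym.one
        · subst hσ; simp
        · rw [if_neg (by simp [hσ]), if_neg hσ]
          have h1 : l.length + 1 - 1 = l.length := by omega
          rw [h1, List.take_append_of_le_length (le_refl _), List.take_length]
      have hOKlast : extraOK (l ++ [σ]) (l.length + 1) ↔ σ ≠ Sym.e := by
        unfold extraOK
        rw [hlen, hlast]
        constructor
        · rintro ⟨-, -, c, -⟩; intro h; exact c (by rw [h])
        · intro h
          exact ⟨by omega, le_refl _, by simp [h], by omega⟩
      have main : ∀ x, x ∈ ESpec (l ++ [σ]) ↔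
          (x = s(l.length + 1, l.length + 2) ∨ x ∈ ESpec l) ∨
          (σ ≠ Sym.e ∧ x = s(if σ = Sym.one then l.length else oAt l, l.length + 2)) := by
        intro x
        unfold ESpec
        simp only [Set.mem_union, Set.mem_setOf_eq, hlen]
        constructor
        · rintro (⟨j, h1, h2, h3⟩ | ⟨j, hOK, h3⟩)
          · rcases eq_or_lt_of_le h2 with rfl | hlt
            · left; left; rw [h3]
            · left; right; left; exact ⟨j, h1, by omega, h3⟩
          · have h1 := hOK.1
            have h2 := hOK.2.1
            rw [hlen] at h2
            rcases eq_or_lt_of_le h2 with rfl | hlt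
            · right
              refine ⟨hOKlast.mp hOK, ?_⟩
              rw [h3, hbotlast]
            · left; right; right
              have h2' : j ≤ l.length := by omega
              exact ⟨j, (extraOK_append h2').mp hOK, by rw [h3, bot_append h1 h2']⟩
        · rintro ((h | (⟨j, h1, h2, h3⟩ | ⟨j, hOK, h3⟩)) | ⟨hσ, h⟩)
          · left; exact ⟨l.length + 1, by omega, by omega, by rw [h]⟩
          · left; exact ⟨j, h1, by omega, h3⟩
          · right
            exact ⟨j, (extraOK_append hOK.2.1).mpr hOK,
              by rw [h3, bot_append hOK.1 hOK.2.1]⟩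
          · right
            refine ⟨l.length + 1, hOKlast.mpr hσ, ?_⟩
            rw [h, hbotlast]
      ext x
      rw [main x]
      cases σ
      · show x ∈ insert s(k, k + 1) E ↔ _
        simp only [Set.mem_insert_iff, hE, hk]
        have h0 : ¬ (Sym.e ≠ Sym.e) := by simp
        tauto
      · show x ∈ insert s(o, k + 1) (insert s(k, k + 1) E) ↔ _
        simp only [Set.mem_insert_iff, hE, hk, ho]
        have h1 : (if Sym.zero = Sym.one then l.length else oAt l) = oAt l := by simp
        rw [h1]
        have h0 : Sym.zero ≠ Sym.e := by simp
        have h2 : l.length + 1 + 1 = l.length + 2 := by omega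
        rw [h2]
        tauto
      · show x ∈ insert s(k - 1, k + 1) (insert s(k, k + 1) E) ↔ _
        simp only [Set.mem_insert_iff, hE, hk]
        simp only [if_true]
        have h0 : Sym.one ≠ Sym.e := by simp
        have h2 : l.length + 1 + 1 = l.length + 2 := by omega
        have h3 : l.length + 1 - 1 = l.length := by omega
        rw [h2, h3]
        tauto

/-! ### Adjacency in the ladder -/

lemma mem_edgeSet_iff {π : List Sym} {x : Sym2 ℕ} :
    x ∈ (ladder π).edgeSet ↔ x ∈ ESpec π ∧ ¬ x.IsDiag := by
  unfold ladder
  rw [SimpleGraph.edgeSet_fromEdgeSet, edges_eq]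
  simp [Set.mem_diff]

lemma adj_iff {π : List Sym} {u w : ℕ} :
    (ladder π).Adj u w ↔ s(u, w) ∈ ESpec π ∧ u ≠ w := by
  unfold ladder
  rw [SimpleGraph.fromEdgeSet_adj, edges_eq]

lemma bot_le {π : List Sym} {j : ℕ} (hj : 1 ≤ j) : bot π j ≤ j - 1 := by
  unfold bot
  by_cases h : nth π j = some Sym.one
  · rw [if_pos h]
  · rw [if_neg h]
    calc oAt (π.take (j-1)) ≤ (π.take (j-1)).length - 1 := oAt_le
      _ ≤ j - 1 := by rw [List.length_take]; omega

lemma adj_spine {π : List Sym} {j : ℕ} (h1 : 1 ≤ j) (h2 : j ≤ π.length) :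
    (ladder π).Adj j (j + 1) := by
  rw [adj_iff]
  exact ⟨Or.inl ⟨j, h1, h2, rfl⟩, by omega⟩

lemma adj_extra {π : List Sym} {j : ℕ} (h : extraOK π j) :
    (ladder π).Adj (bot π j) (j + 1) := by
  rw [adj_iff]
  have := bot_le (π := π) h.1
  exact ⟨Or.inr ⟨j, h, rfl⟩, by omega⟩

/-! ### The structure of zero-runs -/

/-- The center of the run of a `0` at position `j`. -/
lemma zero_center {π : List Sym} (hP : memPi π) {j : ℕ}
    (hj : nth π j = some Sym.zero) :
    1 ≤ oAt (π.take (j-1)) ∧ oAt (π.take (j-1)) + 2 ≤ j ∧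
      nth π (oAt (π.take (j-1)) + 1) = some Sym.one ∧
      ∀ i, oAt (π.take (j-1)) + 2 ≤ i → i ≤ j → nth π i = some Sym.zero := by
  induction j using Nat.strong_induction_on with
  | _ j ih =>
  have hb := nth_some hj
  have hj1 : j ≠ 1 := fun h => hP.1 (by rw [← h]; exact hj)
  have hj2 : j ≠ 2 := fun h => hP.2.1 (by rw [← h]; exact hj)
  have hj3 : 3 ≤ j := by omega
  -- the previous symbol is not e
  obtain ⟨x, hx⟩ := nth_isSome (π := π) (j := j - 1) (by omega) (by omega)
  have hprev : nth π ((j-1) + 1) = some Sym.zero := by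
    have : (j-1) + 1 = j := by omega
    rw [this]; exact hj
  cases x with
  | e => exact absurd hprev (no_e0 hP hx)
  | one =>
    -- center is j - 2
    have hov : oAt (π.take (j-1)) = j - 2 := by
      have := oAt_take_succ (π := π) (m := j - 1) (by omega) hx
      simp at this
      rw [this]; omega
    rw [hov]
    have e1 : j - 2 + 1 = j - 1 := by omega
    have e2 : j - 2 + 2 = j := by omega
    rw [e1, e2]
    exact ⟨by omega, le_refl _, hx, fun i h1 h2 => by
      have : i = j := by omega
      rw [this]; exact hj⟩
  | zero =>
    have hov : oAt (π.take (j-1)) = oAt (π.take (j-2)) := by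
      have := oAt_take_succ (π := π) (m := j - 1) (by omega) hx
      simp at this
      rw [this]
      first
      | rfl
      | (congr 2; omega)
    have ihm := ih (j-1) (by omega) hx
    have e3 : j - 1 - 1 = j - 2 := by omega
    rw [e3] at ihm
    rw [hov]
    refine ⟨ihm.1, by omega, ihm.2.2.1, fun i h1 h2 => ?_⟩
    rcases eq_or_lt_of_le h2 with rfl | hlt
    · exact hj
    · exact ihm.2.2.2 i h1 (by omega)

/-- Adjacency of the center to everything in its run span. -/
lemma center_adj {π : List Sym} (hP : memPi π) {j : ℕ}
    (hj : nth π j = some Sym.zero) {i : ℕ}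
    (h1 : oAt (π.take (j-1)) + 1 ≤ i) (h2 : i ≤ j + 1) :
    (ladder π).Adj (oAt (π.take (j-1))) i := by
  obtain ⟨hv1, hv2, hv3, hv4⟩ := zero_center hP hj
  set v := oAt (π.take (j-1)) with hv
  have hb := nth_some hj
  rcases eq_or_lt_of_le h1 with rfl | hgt
  · -- spine
    exact adj_spine (by omega) (by omega)
  rcases (show i = v + 2 ∨ v + 3 ≤ i by omega) with rfl | hgt2
  · -- the edge coming from the `1` at position v+1
    have hOK : extraOK π (v + 1) := by
      refine ⟨by omega, by have := nth_some hv3; omega, by rw [hv3]; simp, fun h => ?_⟩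
      · rw [← h]; exact hv3
    have hbot : bot π (v + 1) = v := by
      unfold bot
      rw [if_pos hv3]; omega
    have := adj_extra hOK
    rwa [hbot] at this
  · -- an edge of the run
    have hi0 : nth π (i - 1) = some Sym.zero := hv4 (i-1) (by omega) (by omega)
    have hOK : extraOK π (i - 1) := by
      refine ⟨by omega, by have := nth_some hi0; omega, by rw [hi0]; simp, fun h => by omega⟩
    have hbot : bot π (i - 1) = v := by
      unfold bot
      rw [if_neg (by rw [hi0]; simp)]
      -- centers agree: the run containing i-1 has the same center v
      obtain ⟨hw1, hw2, hw3, hw4⟩ := zero_center hP hi0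
      set v' := oAt (π.take (i - 1 - 1)) with hv'
      rcases lt_trichotomy v' v with hlt | heq | hgt'
      · exfalso
        have : nth π (v + 1) = some Sym.zero := hw4 (v+1) (by omega) (by omega)
        rw [hv3] at this; simp at this
      · exact heq.symm ▸ rfl
      · exfalso
        have : nth π (v' + 1) = some Sym.zero := hv4 (v'+1) (by omega) (by omega)
        rw [hw3] at this; simp at this
    have := adj_extra hOK
    have he : i - 1 + 1 = i := by omega
    rw [hbot, he] at this
    exact this

/-- The no-`M`-fan condition bounds the span of any zero-run. -/
lemma span_bound {π : List Sym} {M : ℕ} (hP : memPi π) (hfan : ¬ hasFan π M) {j : ℕ}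
    (hj : nth π j = some Sym.zero) : j + 1 ≤ oAt (π.take (j-1)) + M := by
  by_contra hcon
  push_neg at hcon
  obtain ⟨hv1, hv2, hv3, hv4⟩ := zero_center hP hj
  have hb0 := nth_some hj
  set v := oAt (π.take (j-1)) with hv
  apply hfan
  refine ⟨v, by omega, ?_⟩
  by_cases he : nth π (v - 2) = some Sym.e
  · right
    refine ⟨he, ?_, fun b hb => ?_⟩
    · -- v ≥ 2 here since nth π 0 = none
      have hv2' : 2 ≤ v := by
        by_contra h
        have : v - 2 = 0 := by omega
        rw [this] at he
        unfold nth at he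
        simp at he
      have := adj_spine (π := π) (j := v - 1) (by omega) (by omega)
      have e1 : v - 1 + 1 = v := by omega
      rw [e1] at this
      exact this.symm
    · rw [Finset.mem_Icc] at hb
      exact center_adj hP hj (by omega) (by omega)
  · left
    refine ⟨he, fun b hb => ?_⟩
    rw [Finset.mem_Icc] at hb
    exact center_adj hP hj (by omega) (by omega)

/-! ### Interval structure of finite sets -/

def leftEnds (R : Finset ℕ) : Finset ℕ := R.filter (fun w => w - 1 ∉ R)

lemma min_mem_leftEnds {R : Finset ℕ} (hne : R.Nonempty) (h2 : ∀ w ∈ R, 2 ≤ w) :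
    R.min' hne ∈ leftEnds R := by
  unfold leftEnds
  rw [Finset.mem_filter]
  refine ⟨R.min'_mem hne, fun hmem => ?_⟩
  have h1 := R.min'_le _ hmem
  have h3 := h2 _ (R.min'_mem hne)
  omega

lemma leftEnds_empty {R : Finset ℕ} (h2 : ∀ w ∈ R, 2 ≤ w)
    (hk : (leftEnds R).card = 0) : R = ∅ := by
  by_contra h
  have hne : R.Nonempty := Finset.nonempty_iff_ne_empty.mpr h
  have := min_mem_leftEnds hne h2
  rw [Finset.card_eq_zero] at hk
  rw [hk] at this
  exact absurd this (Finset.notMem_empty _)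

/-- If `w ∉ R` but something above `w` is in `R`, there is a left end in `(w, u]`. -/
lemma fill_lemma {R : Finset ℕ} (h2 : ∀ w ∈ R, 2 ≤ w) {w u : ℕ}
    (hw : w ∉ R) (hu : u ∈ R) (hwu : w < u) :
    ∃ c ∈ leftEnds R, w < c ∧ c ≤ u := by
  classical
  set T := R.filter (fun x => w < x ∧ x ≤ u) with hT
  have hTne : T.Nonempty := ⟨u, by simp [hT, Finset.mem_filter, hu, hwu]⟩
  set c := T.min' hTne with hc
  have hcT : c ∈ R ∧ (w < c ∧ c ≤ u) := Finset.mem_filter.mp (T.min'_mem hTne)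
  refine ⟨c, ?_, hcT.2.1, hcT.2.2⟩
  unfold leftEnds
  rw [Finset.mem_filter]
  refine ⟨hcT.1, fun hmem => ?_⟩
  have hc2 := h2 _ hcT.1
  have : c - 1 ∈ T := by
    refine Finset.mem_filter.mpr ⟨hmem, ?_, by omega⟩
    rcases eq_or_lt_of_le (show w ≤ c - 1 by omega) with heq | hlt
    · exact absurd (heq ▸ hmem) hw
    · exact hlt
  have := T.min'_le _ this
  omega

lemma interval_of_k1 {R : Finset ℕ} (h2 : ∀ w ∈ R, 2 ≤ w)
    (hk : (leftEnds R).card = 1) :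
    ∃ a b, 2 ≤ a ∧ a ≤ b ∧ R = Finset.Icc a b := by
  have hne : R.Nonempty := by
    by_contra h
    rw [Finset.not_nonempty_iff_eq_empty] at h
    subst h
    simp [leftEnds] at hk
  obtain ⟨x, hx⟩ := Finset.card_eq_one.mp hk
  set a := R.min' hne
  set b := R.max' hne
  have hax : a = x := by
    have := min_mem_leftEnds hne h2
    rw [hx, Finset.mem_singleton] at this
    exact this
  refine ⟨a, b, h2 _ (R.min'_mem hne), R.min'_le _ (R.max'_mem hne), ?_⟩
  apply Finset.Subset.antisymm
  · intro w hw
    rw [Finset.mem_Icc]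
    exact ⟨R.min'_le _ hw, R.le_max' _ hw⟩
  · intro w hw
    rw [Finset.mem_Icc] at hw
    by_contra hwR
    have hwb : w < b := by
      rcases eq_or_lt_of_le hw.2 with rfl | h
      · exact absurd (R.max'_mem hne) hwR
      · exact h
    obtain ⟨c, hc1, hc2, -⟩ := fill_lemma h2 hwR (R.max'_mem hne) hwb
    rw [hx, Finset.mem_singleton] at hc1
    have : a ≤ w := hw.1
    omega

lemma interval_of_k2 {R : Finset ℕ} (h2 : ∀ w ∈ R, 2 ≤ w)
    (hk : (leftEnds R).card = 2) :
    ∃ a1 b1 a2 b2, 2 ≤ a1 ∧ a1 ≤ b1 ∧ b1 + 2 ≤ a2 ∧ a2 ≤ b2 ∧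
      R = Finset.Icc a1 b1 ∪ Finset.Icc a2 b2 := by
  classical
  have hne : R.Nonempty := by
    by_contra h
    rw [Finset.not_nonempty_iff_eq_empty] at h
    subst h
    simp [leftEnds] at hk
  obtain ⟨x, y, hxy, hset⟩ := Finset.card_eq_two.mp hk
  have hsub : leftEnds R ⊆ R := Finset.filter_subset _ _
  have hxR : x ∈ R := hsub (by rw [hset]; simp)
  have hyR : y ∈ R := hsub (by rw [hset]; simp)
  -- order x < y wlog
  obtain ⟨a1, a2, ha12, hset2⟩ : ∃ a1 a2, a1 < a2 ∧ leftEnds R = {a1, a2} := by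
    rcases lt_or_gt_of_ne hxy with h | h
    · exact ⟨x, y, h, hset⟩
    · exact ⟨y, x, h, by rw [hset, Finset.pair_comm]⟩
  have ha1R : a1 ∈ R := hsub (by rw [hset2]; simp)
  have ha2R : a2 ∈ R := hsub (by rw [hset2]; simp)
  have ha2left : a2 ∈ leftEnds R := by rw [hset2]; simp
  have ha2pred : a2 - 1 ∉ R := by
    unfold leftEnds at ha2left
    rw [Finset.mem_filter] at ha2left
    exact ha2left.2
  have hmin : R.min' hne = a1 := by
    have hm := min_mem_leftEnds hne h2
    rw [hset2] at hm
    simp at hm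
    have h1 := R.min'_le _ ha1R
    rcases hm with hm | hm <;> omega
  set b2 := R.max' hne with hb2
  have hT1ne : (R.filter (fun v => v < a2)).Nonempty := ⟨a1, by simp [ha1R, ha12]⟩
  set b1 := (R.filter (fun v => v < a2)).max' hT1ne with hb1
  have hb1mem := (R.filter (fun v => v < a2)).max'_mem hT1ne
  rw [Finset.mem_filter] at hb1mem
  have hb1a2 : b1 + 2 ≤ a2 := by
    have h1 : b1 < a2 := hb1mem.2
    rcases (show b1 + 1 = a2 ∨ b1 + 2 ≤ a2 by omega) with h | h
    · exfalso
      apply ha2pred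
      have : a2 - 1 = b1 := by omega
      rw [this]
      exact hb1mem.1
    · exact h
  refine ⟨a1, b1, a2, b2, h2 _ ha1R, ?_, hb1a2, R.le_max' _ ha2R, ?_⟩
  · rw [← hmin]
    exact R.min'_le _ hb1mem.1
  apply Finset.Subset.antisymm
  · intro w hw
    rw [Finset.mem_union, Finset.mem_Icc, Finset.mem_Icc]
    by_cases hwa : w < a2
    · left
      constructor
      · rw [← hmin]; exact R.min'_le _ hw
      · exact Finset.le_max' _ _ (by simp [hw, hwa])
    · right
      exact ⟨by omega, R.le_max' _ hw⟩
  · intro w hw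
    rw [Finset.mem_union, Finset.mem_Icc, Finset.mem_Icc] at hw
    by_contra hwR
    rcases hw with ⟨hw1, hw2⟩ | ⟨hw1, hw2⟩
    · -- in the first interval
      have hwb : w < b1 := by
        rcases eq_or_lt_of_le hw2 with rfl | h
        · exact absurd hb1mem.1 hwR
        · exact h
      obtain ⟨c, hc1, hc2, hc3⟩ := fill_lemma h2 hwR hb1mem.1 hwb
      rw [hset2] at hc1
      simp at hc1
      rcases hc1 with rfl | rfl <;> omega
    · have hwb : w < b2 := by
        rcases eq_or_lt_of_le hw2 with rfl | h
        · exact absurd (R.max'_mem hne) hwR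
        · exact h
      obtain ⟨c, hc1, hc2, hc3⟩ := fill_lemma h2 hwR (R.max'_mem hne) hwb
      rw [hset2] at hc1
      simp at hc1
      rcases hc1 with rfl | rfl <;> omega

/-- Refined span bound when the center follows an `e`. -/
lemma span_bound_e {π : List Sym} {M : ℕ} (hP : memPi π) (hfan : ¬ hasFan π M) {j : ℕ}
    (hj : nth π j = some Sym.zero)
    (he : nth π (oAt (π.take (j-1)) - 2) = some Sym.e) :
    j + 2 ≤ oAt (π.take (j-1)) + M := by
  by_contra hcon
  push_neg at hcon
  obtain ⟨hv1, hv2, hv3, hv4⟩ := zero_center hP hj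
  have hb0 := nth_some hj
  set v := oAt (π.take (j-1)) with hv
  apply hfan
  refine ⟨v, by omega, ?_⟩
  right
  refine ⟨he, ?_, fun b hb => ?_⟩
  · have hv2' : 2 ≤ v := by
      by_contra h
      have h0 : v - 2 = 0 := by omega
      rw [h0] at he
      unfold nth at he
      simp at he
    have := adj_spine (π := π) (j := v - 1) (by omega) (by omega)
    have e1 : v - 1 + 1 = v := by omega
    rw [e1] at this
    exact this.symm
  · rw [Finset.mem_Icc] at hb
    exact center_adj hP hj (by omega) (by omega)

/-! ### Context for the main counting argument -/

structure Ctx (M : ℕ) (π : List Sym) (y : ℕ) (R : Finset ℕ) : Prop where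
  hM : 3 ≤ M
  hP : memPi π
  hfan : ¬ hasFan π M
  hcase : (π.count Sym.e = 0 ∧ π.length + 1 = 3 * M) ∨
          (π.count Sym.e = 1 ∧ π.length = 2 * M) ∨
          (π.count Sym.e = 2 ∧ π.length = M + 1)
  hyn : y = π.length ∨ y = bot π π.length
  hpn : nth π π.length ≠ some Sym.e
  hpy : nth π y ≠ some Sym.e
  hRsub : ∀ w ∈ R, 2 ≤ w ∧ w ≤ π.length
  hyR : y ∉ R

variable {M : ℕ} {π : List Sym} {y : ℕ} {R : Finset ℕ}

lemma Ctx.hnM (C : Ctx M π y R) : M + 1 ≤ π.length := by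
  rcases C.hcase with ⟨-, h⟩ | ⟨-, h⟩ | ⟨-, h⟩ <;> (have := C.hM; omega)

lemma no_e_of_count0 (h : π.count Sym.e = 0) (j : ℕ) : nth π j ≠ some Sym.e := by
  intro hj
  have := card_le_count ({j} : Finset ℕ) (by simpa using hj)
  simp [h] at this

lemma bot_one {j : ℕ} (h : nth π j = some Sym.one) : bot π j = j - 1 := by
  unfold bot; rw [if_pos h]

/-- Package of facts about the run of a `0` at position `b`. -/
lemma zero_pack (hP : memPi π) (hfan : ¬ hasFan π M) {b : ℕ}
    (hb : nth π b = some Sym.zero) :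
    1 ≤ bot π b ∧ bot π b + 2 ≤ b ∧ nth π (bot π b + 1) = some Sym.one ∧
      (∀ i, bot π b + 2 ≤ i → i ≤ b → nth π i = some Sym.zero) ∧
      b + 1 ≤ bot π b + M := by
  have hbo : bot π b = oAt (π.take (b-1)) := by
    unfold bot; rw [if_neg (by rw [hb]; simp)]
  rw [hbo]
  exact ⟨(zero_center hP hb).1, (zero_center hP hb).2.1, (zero_center hP hb).2.2.1,
    (zero_center hP hb).2.2.2, span_bound hP hfan hb⟩

/-- A zero-run reaching below `a` cannot contain a gap-making `e` in `[a-1, b-1]`. -/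
lemma gap_contra (hP : memPi π) (hfan : ¬ hasFan π M) {a b w : ℕ}
    (hb : nth π b = some Sym.zero) (hvb : bot π b < a)
    (hw1 : a ≤ w) (hw2 : w ≤ b) (hwe : nth π (w-1) = some Sym.e) : False := by
  obtain ⟨hv1, hv2, hv3, hv4, hv5⟩ := zero_pack hP hfan hb
  set v := bot π b with hv
  have hbn := nth_some hb
  rcases (show w - 1 = v ∨ w - 1 = v + 1 ∨ v + 2 ≤ w - 1 by omega) with h | h | h
  · -- w - 1 = v : the symbols e,1 are followed by a 0
    rw [h] at hwe
    have h1 := e1_forces hP hwe hv3 (by omega)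
    have h2 := hv4 (v+2) (le_refl _) (by omega)
    rw [h1] at h2
    simp at h2
  · rw [h] at hwe
    rw [hv3] at hwe
    simp at hwe
  · have := hv4 (w-1) h (by omega)
    rw [hwe] at this
    simp at this

/-- The bottom of the extra edge at the right end of an interval lies in the interval. -/
lemma botb_mem (hP : memPi π) (hfan : ¬ hasFan π M) {a b : ℕ}
    (h2a : 2 ≤ a) (hbn : b ≤ π.length) (hab : a < b)
    (hbe : nth π b ≠ some Sym.e)
    (hlow : a + M ≤ b + 1 ∨ (∃ w, a ≤ w ∧ w ≤ b ∧ nth π (w-1) = some Sym.e)) :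
    a ≤ bot π b ∧ bot π b ≤ b - 1 := by
  obtain ⟨σ, hσ⟩ := nth_isSome (π := π) (j := b) (by omega) hbn
  cases σ with
  | e => exact absurd hσ hbe
  | one =>
    rw [bot_one hσ]
    omega
  | zero =>
    obtain ⟨hv1, hv2, hv3, hv4, hv5⟩ := zero_pack hP hfan hσ
    refine ⟨?_, by omega⟩
    by_contra hcon
    push_neg at hcon
    rcases hlow with h | ⟨w, hw1, hw2, hwe⟩
    · omega
    · exact gap_contra hP hfan hσ hcon hw1 hw2 hwe

/-- Same for the extra edge just beyond the right end. -/
lemma botb1_mem (hP : memPi π) (hfan : ¬ hasFan π M) {a b : ℕ}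
    (h2a : 2 ≤ a) (hab : a < b) (hb1n : b + 1 ≤ π.length)
    (hbe : nth π b ≠ some Sym.e) (hbe1 : nth π (b+1) ≠ some Sym.e)
    (hprev : a ≤ bot π b) :
    a ≤ bot π (b+1) ∧ bot π (b+1) ≤ b := by
  obtain ⟨σ, hσ⟩ := nth_isSome (π := π) (j := b+1) (by omega) hb1n
  cases σ with
  | e => exact absurd hσ hbe1
  | one =>
    rw [bot_one hσ]
    omega
  | zero =>
    obtain ⟨hv1, hv2, hv3, hv4, hv5⟩ := zero_pack hP hfan hσ
    refine ⟨?_, by omega⟩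
    by_contra hcon
    push_neg at hcon
    -- the run through b+1 would cover the interval's right end
    obtain ⟨τ, hτ⟩ := nth_isSome (π := π) (j := b) (by omega) (by omega)
    cases τ with
    | e => exact absurd hτ hbe
    | one =>
      have := hv4 b (by omega) (by omega)
      rw [hτ] at this; simp at this
    | zero =>
      obtain ⟨hu1, hu2, hu3, hu4, hu5⟩ := zero_pack hP hfan hτ
      have hle : bot π b + 1 ≤ b + 1 := by omega
      have := hv4 (bot π b + 1) (by omega) hle
      rw [hu3] at this; simp at this

/-! ### The escape set -/

def escSet (π : List Sym) (R : Finset ℕ) : Finset ℕ :=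
  (Finset.Icc 1 π.length).filter (fun j => nth π j ≠ some Sym.e ∧
    (j = 1 → nth π 1 = some Sym.one) ∧ bot π j ∈ R ∧ j + 1 ∉ R)

lemma mem_escSet {j : ℕ} (h1 : 2 ≤ j) (h2 : j ≤ π.length) (h3 : nth π j ≠ some Sym.e)
    (h5 : bot π j ∈ R) (h6 : j + 1 ∉ R) : j ∈ escSet π R := by
  unfold escSet
  rw [Finset.mem_filter, Finset.mem_Icc]
  exact ⟨⟨by omega, h2⟩, h3, by omega, h5, h6⟩

lemma Ctx.ybounds (C : Ctx M π y R) : 2 ≤ y ∧ y ≤ π.length := by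
  have hnM := C.hnM
  have hM := C.hM
  rcases C.hyn with rfl | hy
  · omega
  obtain ⟨σ, hσ⟩ := nth_isSome (π := π) (j := π.length) (by omega) (le_refl _)
  have hble := bot_le (π := π) (j := π.length) (by omega)
  cases σ with
  | e => exact absurd hσ C.hpn
  | one =>
    rw [hy, bot_one hσ]
    omega
  | zero =>
    obtain ⟨hv1, hv2, hv3, hv4, hv5⟩ := zero_pack C.hP C.hfan hσ
    rw [hy]
    omega

/-- A maximal run `[a,b]` of `R` with `a < b` cannot reach the last position. -/
lemma Ctx.not_top (C : Ctx M π y R) {a b : ℕ} (hsub : Finset.Icc a b ⊆ R)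
    (h2a : 2 ≤ a) (hab : a < b) (hbn : b = π.length)
    (hlow : a + M ≤ b + 1 ∨ (∃ w, a ≤ w ∧ w ≤ b ∧ nth π (w-1) = some Sym.e)) : False := by
  have hbe : nth π b ≠ some Sym.e := by rw [hbn]; exact C.hpn
  obtain ⟨hb1, hb2⟩ := botb_mem C.hP C.hfan h2a (by omega) hab hbe hlow
  rcases C.hyn with hy | hy
  · exact C.hyR (hsub (by rw [Finset.mem_Icc]; omega))
  · rw [← hbn] at hy
    apply C.hyR
    rw [hy]
    apply hsub
    rw [Finset.mem_Icc]
    omega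

lemma Ctx.e_at_pred (C : Ctx M π y R) (h : nth π (π.length - 1) = some Sym.e) :
    y = π.length := by
  have hnM := C.hnM
  have hM := C.hM
  rcases C.hyn with h' | h'
  · exact h'
  exfalso
  obtain ⟨σ, hσ⟩ := nth_isSome (π := π) (j := π.length) (by omega) (le_refl _)
  cases σ with
  | e => exact absurd hσ C.hpn
  | zero =>
    have := no_e0 C.hP h
    have he : π.length - 1 + 1 = π.length := by omega
    rw [he] at this
    exact this hσ
  | one =>
    apply C.hpy
    rw [h', bot_one hσ]
    exact h

/-! ### Escape lemmas for a single interval -/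

lemma K1a (C : Ctx M π y R) {a b : ℕ} (hR : R = Finset.Icc a b) (h2a : 2 ≤ a)
    (hbn : b ≤ π.length) (hr : a + M ≤ b + 1) : 1 ≤ (escSet π R).card := by
  have hM := C.hM
  have hab : a < b := by omega
  have hnotb1 : b + 1 ∉ R := by rw [hR, Finset.mem_Icc]; omega
  have hnotb2 : b + 2 ∉ R := by rw [hR, Finset.mem_Icc]; omega
  obtain ⟨σ, hσ⟩ := nth_isSome (π := π) (j := b) (by omega) hbn
  rcases (show σ ≠ Sym.e ∨ σ = Sym.e from by cases σ <;> simp) with hne | rfl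
  · -- the last symbol of the interval is 0/1 : escape at b
    obtain ⟨h1, h2⟩ := botb_mem C.hP C.hfan h2a hbn hab
      (by rw [hσ]; simp [hne]) (Or.inl hr)
    refine Finset.card_pos.mpr ⟨b, mem_escSet (by omega) hbn (by rw [hσ]; simp [hne])
      (by rw [hR, Finset.mem_Icc]; omega) hnotb1⟩
  · -- e at b
    have hbn' : b + 1 ≤ π.length := by
      rcases eq_or_lt_of_le hbn with rfl | h
      · exact absurd hσ C.hpn
      · omega
    obtain ⟨τ, hτ⟩ := nth_isSome (π := π) (j := b + 1) (by omega) hbn'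
    cases τ with
    | zero => exact absurd hτ (no_e0 C.hP hσ)
    | e =>
      -- two e's: the word is short, contradiction with the interval length
      have h2e := two_e hσ hτ (by omega)
      rcases C.hcase with ⟨h, -⟩ | ⟨h, -⟩ | ⟨-, h⟩ <;> omega
    | one =>
      refine Finset.card_pos.mpr ⟨b + 1, mem_escSet (by omega) hbn' (by rw [hτ]; simp)
        ?_ hnotb2⟩
      rw [bot_one hτ]
      rw [hR, Finset.mem_Icc]
      omega

lemma K1b (C : Ctx M π y R) {a b : ℕ} (hR : R = Finset.Icc a b) (h2a : 2 ≤ a)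
    (hbn : b ≤ π.length) (hr : a + 2 * M ≤ b + 2) : 2 ≤ (escSet π R).card := by
  have hM := C.hM
  have hnM := C.hnM
  have hab : a < b := by omega
  have hnotb1 : b + 1 ∉ R := by rw [hR, Finset.mem_Icc]; omega
  have hnotb2 : b + 2 ∉ R := by rw [hR, Finset.mem_Icc]; omega
  have hyb := C.ybounds
  -- the count of e's must be 0
  have hε : π.count Sym.e = 0 := by
    rcases C.hcase with ⟨h, -⟩ | ⟨h, hn⟩ | ⟨h, hn⟩
    · exact h
    all_goals
    · exfalso
      have hy : a ≤ y ∧ y ≤ b := by omega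
      exact C.hyR (by rw [hR, Finset.mem_Icc]; omega)
  -- b is not the last position
  have hbn' : b + 1 ≤ π.length := by
    rcases eq_or_lt_of_le hbn with heq | h
    · exact absurd (C.not_top (by rw [hR]) h2a hab heq (Or.inl (by omega))) not_false
    · omega
  -- escape at b
  obtain ⟨h1, h2⟩ := botb_mem C.hP C.hfan h2a hbn hab
    (no_e_of_count0 hε b) (Or.inl (by omega))
  have hm1 : b ∈ escSet π R := mem_escSet (by omega) hbn (no_e_of_count0 hε b)
    (by rw [hR, Finset.mem_Icc]; omega) hnotb1
  -- escape at b+1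
  obtain ⟨h3, h4⟩ := botb1_mem C.hP C.hfan h2a hab hbn'
    (no_e_of_count0 hε b) (no_e_of_count0 hε (b+1)) h1
  have hm2 : b + 1 ∈ escSet π R := mem_escSet (by omega) hbn' (no_e_of_count0 hε (b+1))
    (by rw [hR, Finset.mem_Icc]; omega) hnotb2
  calc (2 : ℕ) = ({b, b+1} : Finset ℕ).card := by
        rw [Finset.card_insert_of_notMem (by simp), Finset.card_singleton]
    _ ≤ (escSet π R).card := Finset.card_le_card (by
        intro x hx
        simp at hx
        rcases hx with rfl | rfl
        exacts [hm1, hm2])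

lemma K1c (C : Ctx M π y R) {a b : ℕ} (hR : R = Finset.Icc a b) (h2a : 2 ≤ a)
    (hbn : b ≤ π.length) (hab : a ≤ b)
    (hgap : ∃ w ∈ R, nth π (w-1) = some Sym.e) : 1 ≤ (escSet π R).card := by
  have hM := C.hM
  have hnM := C.hnM
  obtain ⟨w, hwR, hwe⟩ := hgap
  have hw : a ≤ w ∧ w ≤ b := by rw [hR, Finset.mem_Icc] at hwR; exact hwR
  have hnotb1 : b + 1 ∉ R := by rw [hR, Finset.mem_Icc]; omega
  have hnotb2 : b + 2 ∉ R := by rw [hR, Finset.mem_Icc]; omega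
  rcases eq_or_lt_of_le hab with rfl | hab'
  · -- singleton interval {a}, with π(a-1) = e
    have hwa : w = a := by omega
    subst hwa
    obtain ⟨σ, hσ⟩ := nth_isSome (π := π) (j := w) (by omega) hbn
    cases σ with
    | zero =>
      exfalso
      have := no_e0 C.hP hwe
      have he : w - 1 + 1 = w := by omega
      rw [he] at this
      exact this hσ
    | one =>
      -- forced 1 at a+1, escape (a, a+2)
      have hwn : w + 1 ≤ π.length := by
        rcases eq_or_lt_of_le hbn with heq | h
        · exfalso
          apply C.hyR
          have := C.e_at_pred (by rw [← heq]; exact hwe)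
          rw [this, ← heq]
          exact hwR
        · omega
      have hf := e1_forces C.hP hwe (by
          have he : w - 1 + 1 = w := by omega
          rw [he]; exact hσ) (by omega)
      have he2 : w - 1 + 2 = w + 1 := by omega
      rw [he2] at hf
      refine Finset.card_pos.mpr ⟨w + 1, mem_escSet (by omega) hwn (by rw [hf]; simp)
        ?_ hnotb2⟩
      rw [bot_one hf]
      simpa using hwR
    | e =>
      have hwn : w + 1 ≤ π.length := by
        rcases eq_or_lt_of_le hbn with heq | h
        · exact absurd (heq ▸ hσ) C.hpn
        · omega
      have hf := ee_forces C.hP hwe (by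
          have he : w - 1 + 1 = w := by omega
          rw [he]; exact hσ) (by omega)
      have he2 : w - 1 + 2 = w + 1 := by omega
      rw [he2] at hf
      refine Finset.card_pos.mpr ⟨w + 1, mem_escSet (by omega) hwn (by rw [hf]; simp)
        ?_ hnotb2⟩
      rw [bot_one hf]
      simpa using hwR
  · -- a < b
    obtain ⟨σ, hσ⟩ := nth_isSome (π := π) (j := b) (by omega) hbn
    rcases (show σ ≠ Sym.e ∨ σ = Sym.e from by cases σ <;> simp) with hne | rfl
    · obtain ⟨h1, h2⟩ := botb_mem C.hP C.hfan h2a hbn hab'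
        (by rw [hσ]; simp [hne]) (Or.inr ⟨w, hw.1, hw.2, hwe⟩)
      exact Finset.card_pos.mpr ⟨b, mem_escSet (by omega) hbn (by rw [hσ]; simp [hne])
        (by rw [hR, Finset.mem_Icc]; omega) hnotb1⟩
    · -- e at b
      have hbn' : b + 1 ≤ π.length := by
        rcases eq_or_lt_of_le hbn with rfl | h
        · exact absurd hσ C.hpn
        · omega
      obtain ⟨τ, hτ⟩ := nth_isSome (π := π) (j := b + 1) (by omega) hbn'
      cases τ with
      | zero => exact absurd hτ (no_e0 C.hP hσ)
      | e => exact absurd (three_e C.hP hwe hσ hτ (by omega) (by omega) (by omega)) not_false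
      | one =>
        refine Finset.card_pos.mpr ⟨b + 1, mem_escSet (by omega) hbn' (by rw [hτ]; simp)
          ?_ hnotb2⟩
        rw [bot_one hτ]
        rw [hR, Finset.mem_Icc]
        omega

lemma K1de (C : Ctx M π y R) {a b : ℕ} (hR : R = Finset.Icc a b) (h2a : 2 ≤ a)
    (hbn : b ≤ π.length) (hab : a < b)
    (hgap : ∃ w ∈ R, nth π (w-1) = some Sym.e)
    (heb : nth π b ≠ some Sym.e) (heb1 : nth π (b+1) ≠ some Sym.e) :
    2 ≤ (escSet π R).card := by
  have hM := C.hM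
  obtain ⟨w, hwR, hwe⟩ := hgap
  have hw : a ≤ w ∧ w ≤ b := by rw [hR, Finset.mem_Icc] at hwR; exact hwR
  have hnotb1 : b + 1 ∉ R := by rw [hR, Finset.mem_Icc]; omega
  have hnotb2 : b + 2 ∉ R := by rw [hR, Finset.mem_Icc]; omega
  have hlow : a + M ≤ b + 1 ∨ (∃ w, a ≤ w ∧ w ≤ b ∧ nth π (w-1) = some Sym.e) :=
    Or.inr ⟨w, hw.1, hw.2, hwe⟩
  have hbn' : b + 1 ≤ π.length := by
    rcases eq_or_lt_of_le hbn with heq | h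
    · exact absurd (C.not_top (by rw [hR]) h2a hab heq hlow) not_false
    · omega
  obtain ⟨h1, h2⟩ := botb_mem C.hP C.hfan h2a hbn hab heb hlow
  have hm1 : b ∈ escSet π R := mem_escSet (by omega) hbn heb
    (by rw [hR, Finset.mem_Icc]; omega) hnotb1
  obtain ⟨h3, h4⟩ := botb1_mem C.hP C.hfan h2a hab hbn' heb heb1 h1
  have hm2 : b + 1 ∈ escSet π R := mem_escSet (by omega) hbn' heb1
    (by rw [hR, Finset.mem_Icc]; omega) hnotb2
  calc (2 : ℕ) = ({b, b+1} : Finset ℕ).card := by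
        rw [Finset.card_insert_of_notMem (by simp), Finset.card_singleton]
    _ ≤ (escSet π R).card := Finset.card_le_card (by
        intro x hx
        simp at hx
        rcases hx with rfl | rfl
        exacts [hm1, hm2])

/-! ### Escape lemmas for two intervals -/

section K2

variable {a1 b1 a2 b2 : ℕ}

lemma K2A (C : Ctx M π y R) (hR : R = Finset.Icc a1 b1 ∪ Finset.Icc a2 b2)
    (h2a : 2 ≤ a1) (h11 : a1 ≤ b1) (h12 : b1 + 2 ≤ a2) (h22 : a2 ≤ b2)
    (hbn : b2 ≤ π.length) (hε : π.count Sym.e = 0)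
    (hr : a1 + a2 + 2 * M ≤ b1 + b2 + 3) : 1 ≤ (escSet π R).card := by
  have hM := C.hM
  have hmem : ∀ x, x ∈ R ↔ (a1 ≤ x ∧ x ≤ b1) ∨ (a2 ≤ x ∧ x ≤ b2) := by
    intro x; rw [hR]; simp [Finset.mem_union, Finset.mem_Icc]
  by_cases h : a1 + M ≤ b1 + 1
  · obtain ⟨h1, h2⟩ := botb_mem C.hP C.hfan h2a (by omega) (by omega)
      (no_e_of_count0 hε b1) (Or.inl h)
    exact Finset.card_pos.mpr ⟨b1, mem_escSet (by omega) (by omega)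
      (no_e_of_count0 hε b1) ((hmem _).mpr (Or.inl ⟨h1, by omega⟩))
      (fun hc => by rw [hmem] at hc; omega)⟩
  · have h' : a2 + M ≤ b2 + 1 := by omega
    obtain ⟨h1, h2⟩ := botb_mem C.hP C.hfan (show 2 ≤ a2 by omega) hbn (by omega)
      (no_e_of_count0 hε b2) (Or.inl h')
    exact Finset.card_pos.mpr ⟨b2, mem_escSet (by omega) hbn
      (no_e_of_count0 hε b2) ((hmem _).mpr (Or.inr ⟨h1, by omega⟩))
      (fun hc => by rw [hmem] at hc; omega)⟩

lemma K2B (C : Ctx M π y R) (hR : R = Finset.Icc a1 b1 ∪ Finset.Icc a2 b2)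
    (h2a : 2 ≤ a1) (h11 : a1 ≤ b1) (h12 : b1 + 2 ≤ a2) (h22 : a2 ≤ b2)
    (hbn : b2 ≤ π.length) (hε : π.count Sym.e = 1)
    (hgap : ∃ w ∈ R, nth π (w-1) = some Sym.e)
    (hr : a1 + a2 + M ≤ b1 + b2 + 2) : 1 ≤ (escSet π R).card := by
  have hM := C.hM
  have hnM := C.hnM
  have hmem : ∀ x, x ∈ R ↔ (a1 ≤ x ∧ x ≤ b1) ∨ (a2 ≤ x ∧ x ≤ b2) := by
    intro x; rw [hR]; simp [Finset.mem_union, Finset.mem_Icc]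
  obtain ⟨w, hwR, hwe⟩ := hgap
  have huniq : ∀ q, nth π q = some Sym.e → q = w - 1 := by
    intro q hq
    by_contra hne
    have := two_e hq hwe hne
    omega
  rw [hmem] at hwR
  have hwpos : 2 ≤ w := by rcases hwR with h | h <;> omega
  rcases hwR with ⟨hw1, hw2⟩ | ⟨hw1, hw2⟩
  · -- gap in I1
    rcases eq_or_lt_of_le h11 with rfl | h11'
    · -- I1 is a singleton {a1} = {w}
      have hww : w = a1 := by omega
      subst hww
      obtain ⟨σ, hσ⟩ := nth_isSome (π := π) (j := w) (by omega) (by omega)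
      cases σ with
      | zero =>
        exfalso
        have := no_e0 C.hP hwe
        have he : w - 1 + 1 = w := by omega
        rw [he] at this
        exact this hσ
      | e => exact absurd (huniq _ hσ) (by omega)
      | one =>
        have hf := e1_forces C.hP hwe (by
            have he : w - 1 + 1 = w := by omega
            rw [he]; exact hσ) (by omega)
        have he2 : w - 1 + 2 = w + 1 := by omega
        rw [he2] at hf
        by_cases hblock : a2 = w + 2
        · -- the cross edge is blocked: find an escape in I2
          obtain ⟨τ, hτ⟩ := nth_isSome (π := π) (j := b2) (by omega) hbn
          cases τ with
          | e => exact absurd (huniq _ hτ) (by omega)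
          | one =>
            have h22' : a2 < b2 := by
              rcases eq_or_lt_of_le h22 with rfl | h
              · omega
              · exact h
            exact Finset.card_pos.mpr ⟨b2, mem_escSet (by omega) hbn (by rw [hτ]; simp)
              (by rw [bot_one hτ, hmem]; omega)
              (fun hc => by rw [hmem] at hc; omega)⟩
          | zero =>
            obtain ⟨hv1, hv2, hv3, hv4, hv5⟩ := zero_pack C.hP C.hfan hτ
            by_cases hvR : bot π b2 ∈ R
            · exact Finset.card_pos.mpr ⟨b2, mem_escSet (by omega) hbn (by rw [hτ]; simp)
                hvR (fun hc => by rw [hmem] at hc; omega)⟩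
            · exfalso
              rw [hmem] at hvR
              push_neg at hvR
              -- v ∉ R, v ≤ b2 - 2 : v is w+1 (the hole) or < w
              rcases (show bot π b2 = w + 1 ∨ bot π b2 < w ∨ (a2 ≤ bot π b2) from by omega)
                with hveq | hvlt | hvge
              · -- run centered at the hole: refined span bound kills r
                have hb2e : bot π b2 = oAt (π.take (b2-1)) := by
                  unfold bot; rw [if_neg (by rw [hτ]; simp)]
                have hsp := span_bound_e C.hP C.hfan hτ (by
                  rw [← hb2e, hveq]
                  have he' : w + 1 - 2 = w - 1 := by omega
                  rw [he']
                  exact hwe)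
                rw [← hb2e] at hsp
                omega
              · -- run covers w+1, contradicting the forced 1 there
                have := hv4 (w+1) (by omega) (by omega)
                rw [hf] at this
                simp at this
              · omega
        · -- cross edge escapes
          refine Finset.card_pos.mpr ⟨w + 1, mem_escSet (by omega) (by omega)
            (by rw [hf]; simp) (by rw [bot_one hf, hmem]; omega)
            (fun hc => by rw [hmem] at hc; omega)⟩
    · -- a1 < b1 : escape at b1
      have hbe : nth π b1 ≠ some Sym.e := by
        intro hc
        have := huniq _ hc
        omega
      obtain ⟨h1, h2⟩ := botb_mem C.hP C.hfan h2a (by omega) h11' hbe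
        (Or.inr ⟨w, hw1, hw2, hwe⟩)
      exact Finset.card_pos.mpr ⟨b1, mem_escSet (by omega) (by omega) hbe
        ((hmem _).mpr (Or.inl ⟨h1, by omega⟩)) (fun hc => by rw [hmem] at hc; omega)⟩
  · -- gap in I2
    rcases eq_or_lt_of_le h22 with rfl | h22'
    · -- I2 singleton {a2} = {w}
      have hww : w = a2 := by omega
      subst hww
      obtain ⟨σ, hσ⟩ := nth_isSome (π := π) (j := w) (by omega) hbn
      cases σ with
      | zero =>
        exfalso
        have := no_e0 C.hP hwe
        have he : w - 1 + 1 = w := by omega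
        rw [he] at this
        exact this hσ
      | e => exact absurd (huniq _ hσ) (by omega)
      | one =>
        have hwn : w + 1 ≤ π.length := by
          rcases eq_or_lt_of_le hbn with heq | h
          · exfalso
            apply C.hyR
            have := C.e_at_pred (by rw [← heq]; exact hwe)
            rw [this, ← heq, hmem]
            omega
          · omega
        have hf := e1_forces C.hP hwe (by
            have he : w - 1 + 1 = w := by omega
            rw [he]; exact hσ) (by omega)
        have he2 : w - 1 + 2 = w + 1 := by omega
        rw [he2] at hf
        exact Finset.card_pos.mpr ⟨w + 1, mem_escSet (by omega) hwn (by rw [hf]; simp)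
          (by rw [bot_one hf, hmem]; omega) (fun hc => by rw [hmem] at hc; omega)⟩
    · -- a2 < b2 : escape at b2
      have hbe : nth π b2 ≠ some Sym.e := by
        intro hc
        have := huniq _ hc
        omega
      obtain ⟨h1, h2⟩ := botb_mem C.hP C.hfan (show 2 ≤ a2 by omega) hbn h22' hbe
        (Or.inr ⟨w, hw1, hw2, hwe⟩)
      exact Finset.card_pos.mpr ⟨b2, mem_escSet (by omega) hbn hbe
        ((hmem _).mpr (Or.inr ⟨h1, by omega⟩)) (fun hc => by rw [hmem] at hc; omega)⟩

lemma K2C (C : Ctx M π y R) (hR : R = Finset.Icc a1 b1 ∪ Finset.Icc a2 b2)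
    (h2a : 2 ≤ a1) (h11 : a1 ≤ b1) (h12 : b1 + 2 ≤ a2) (h22 : a2 ≤ b2)
    (hbn : b2 ≤ π.length)
    (hgap : ∃ w1 ∈ R, ∃ w2 ∈ R, w1 < w2 ∧ nth π (w1-1) = some Sym.e ∧
      nth π (w2-1) = some Sym.e) : 1 ≤ (escSet π R).card := by
  have hM := C.hM
  have hnM := C.hnM
  have hmem : ∀ x, x ∈ R ↔ (a1 ≤ x ∧ x ≤ b1) ∨ (a2 ≤ x ∧ x ≤ b2) := by
    intro x; rw [hR]; simp [Finset.mem_union, Finset.mem_Icc]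
  obtain ⟨w1, hw1R, w2, hw2R, h12', hwe1, hwe2⟩ := hgap
  rw [hmem] at hw1R hw2R
  have hw1pos : 2 ≤ w1 := by rcases hw1R with h | h <;> omega
  have hw2pos : 2 ≤ w2 := by rcases hw2R with h | h <;> omega
  have hloc : ∀ q, nth π q = some Sym.e → q = w1 - 1 ∨ q = w2 - 1 := by
    intro q hq
    by_contra hne
    push_neg at hne
    exact three_e C.hP hwe1 hwe2 hq (by omega) (Ne.symm hne.1) (Ne.symm hne.2)
  rcases hw2R with ⟨hw1', hw2'⟩ | ⟨hw1', hw2'⟩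
  · -- w2 in I1
    have h11' : a1 < b1 := by
      have : w1 ∈ Finset.Icc a1 b1 ∨ w1 ∈ Finset.Icc a2 b2 := by
        rw [Finset.mem_Icc, Finset.mem_Icc]; exact hw1R
      rcases this with h | h <;> rw [Finset.mem_Icc] at h <;> omega
    have hbe : nth π b1 ≠ some Sym.e := by
      intro hc
      rcases hloc _ hc with h | h <;> omega
    obtain ⟨h1, h2⟩ := botb_mem C.hP C.hfan h2a (by omega) h11' hbe
      (Or.inr ⟨w2, hw1', hw2', hwe2⟩)
    exact Finset.card_pos.mpr ⟨b1, mem_escSet (by omega) (by omega) hbe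
      ((hmem _).mpr (Or.inl ⟨h1, by omega⟩)) (fun hc => by rw [hmem] at hc; omega)⟩
  · -- w2 in I2
    rcases eq_or_lt_of_le h22 with rfl | h22'
    · have hww : w2 = a2 := by omega
      subst hww
      obtain ⟨σ, hσ⟩ := nth_isSome (π := π) (j := w2) (by omega) hbn
      cases σ with
      | zero =>
        exfalso
        have := no_e0 C.hP hwe2
        have he : w2 - 1 + 1 = w2 := by omega
        rw [he] at this
        exact this hσ
      | e =>
        rcases hloc _ hσ with h | h <;> omega
      | one =>
        have hwn : w2 + 1 ≤ π.length := by
          rcases eq_or_lt_of_le hbn with heq | h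
          · exfalso
            apply C.hyR
            have := C.e_at_pred (by rw [← heq]; exact hwe2)
            rw [this, ← heq, hmem]
            omega
          · omega
        have hf := e1_forces C.hP hwe2 (by
            have he : w2 - 1 + 1 = w2 := by omega
            rw [he]; exact hσ) (by omega)
        have he2 : w2 - 1 + 2 = w2 + 1 := by omega
        rw [he2] at hf
        exact Finset.card_pos.mpr ⟨w2 + 1, mem_escSet (by omega) hwn (by rw [hf]; simp)
          (by rw [bot_one hf, hmem]; omega) (fun hc => by rw [hmem] at hc; omega)⟩
    · have hbe : nth π b2 ≠ some Sym.e := by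
        intro hc
        rcases hloc _ hc with h | h <;> omega
      obtain ⟨h1, h2⟩ := botb_mem C.hP C.hfan (show 2 ≤ a2 by omega) hbn h22' hbe
        (Or.inr ⟨w2, hw1', hw2', hwe2⟩)
      exact Finset.card_pos.mpr ⟨b2, mem_escSet (by omega) hbn hbe
        ((hmem _).mpr (Or.inr ⟨h1, by omega⟩)) (fun hc => by rw [hmem] at hc; omega)⟩

end K2

/-! ### The master inequality -/

lemma Ctx.alpha_le (C : Ctx M π y R) :
    (R.filter (fun w => nth π (w-1) = some Sym.e)).card ≤ π.count Sym.e := by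
  classical
  have hinj : Set.InjOn (fun w => w - 1)
      ↑(R.filter (fun w => nth π (w-1) = some Sym.e)) := by
    intro x hx z hz h
    simp only [Finset.coe_filter, Set.mem_setOf_eq] at hx hz
    have hx2 := (C.hRsub x hx.1).1
    have hz2 := (C.hRsub z hz.1).1
    simp at h
    omega
  calc (R.filter (fun w => nth π (w-1) = some Sym.e)).card
      = ((R.filter (fun w => nth π (w-1) = some Sym.e)).image (fun w => w - 1)).card :=
        (Finset.card_image_of_injOn hinj).symm
    _ ≤ π.count Sym.e := by
        apply card_le_count
        intro p hp
        simp only [Finset.mem_image, Finset.mem_filter] at hp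
        obtain ⟨w, ⟨-, hw⟩, rfl⟩ := hp
        exact hw

lemma Ctx.card_le (C : Ctx M π y R) : R.card + 2 ≤ π.length := by
  have hy := C.ybounds
  have hnM := C.hnM
  have hM := C.hM
  have hsub : R ⊆ (Finset.Icc 2 π.length).erase y := by
    intro w hw
    rw [Finset.mem_erase, Finset.mem_Icc]
    refine ⟨fun h => C.hyR (h ▸ hw), (C.hRsub w hw).1, (C.hRsub w hw).2⟩
  have := Finset.card_le_card hsub
  rw [Finset.card_erase_of_mem (by rw [Finset.mem_Icc]; omega), Nat.card_Icc] at this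
  omega

theorem keyIneq (C : Ctx M π y R) :
    R.card + (M - 1) * (R.filter (fun w => nth π (w-1) = some Sym.e)).card
      ≤ (M - 1) * ((leftEnds R).card + (escSet π R).card) := by
  classical
  have hM := C.hM
  have hnM := C.hnM
  have hαε := C.alpha_le
  have hrn := C.card_le
  have hεle := C.hP.2.2.1
  set α := (R.filter (fun w => nth π (w-1) = some Sym.e)).card with hα
  set k := (leftEnds R).card with hk
  set F := (escSet π R).card with hF
  have h2R : ∀ w ∈ R, 2 ≤ w := fun w hw => (C.hRsub w hw).1
  -- basic product monotonicity helper
  have hmono : ∀ c : ℕ, c ≤ k + F → (M - 1) * c ≤ (M - 1) * (k + F) :=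
    fun c hc => Nat.mul_le_mul_left _ hc
  rcases (show k = 0 ∨ k = 1 ∨ k = 2 ∨ 3 ≤ k by omega) with hk0 | hk1 | hk2 | hk3
  · -- empty R
    have hRe : R = ∅ := leftEnds_empty h2R (by rw [← hk]; exact hk0)
    subst hRe
    simp [hα]
  · -- one interval
    obtain ⟨a, b, h2a, hab, hR⟩ := interval_of_k1 h2R (by rw [← hk]; exact hk1)
    have hbR : b ∈ R := by rw [hR, Finset.mem_Icc]; omega
    have hbn : b ≤ π.length := (C.hRsub b hbR).2
    have hr : R.card = b + 1 - a := by rw [hR, Nat.card_Icc]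
    rcases (show α = 0 ∨ α = 1 ∨ α = 2 by omega) with hα0 | hα1 | hα2
    · -- no gaps
      rcases (show b + 1 < a + M ∨ (a + M ≤ b + 1 ∧ b + 2 < a + 2 * M) ∨
          a + 2 * M ≤ b + 2 by omega) with hc | ⟨hc1, hc2⟩ | hc
      · refine le_trans ?_ (hmono 1 (by omega))
        rw [hα0]
        omega
      · have hF1 := K1a C hR h2a hbn hc1
        refine le_trans ?_ (hmono 2 (by omega))
        rw [hα0]
        omega
      · have hF2 := K1b C hR h2a hbn hc
        have hε0 : π.count Sym.e = 0 := by
          rcases C.hcase with ⟨he, hn⟩ | ⟨he, hn⟩ | ⟨he, hn⟩ <;> omega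
        have hn3 : π.length + 1 = 3 * M := by
          rcases C.hcase with ⟨he, hn⟩ | ⟨he, hn⟩ | ⟨he, hn⟩ <;> omega
        refine le_trans ?_ (hmono 3 (by omega))
        rw [hα0]
        omega
    · -- one gap
      have hgap : ∃ w ∈ R, nth π (w-1) = some Sym.e := by
        have : 0 < α := by omega
        rw [hα, Finset.card_pos] at this
        obtain ⟨w, hw⟩ := this
        rw [Finset.mem_filter] at hw
        exact ⟨w, hw.1, hw.2⟩
      have hε1 : 1 ≤ π.count Sym.e := by omega
      rcases (show b + 1 < a + M ∨ a + M ≤ b + 1 by omega) with hc | hc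
      · have hF1 := K1c C hR h2a hbn hab hgap
        refine le_trans ?_ (hmono (k + F) (le_refl _))
        have : (M - 1) * (k + F) = (M-1) * k + (M-1) * F := by ring
        rw [this, hα1]
        have h5 : (M - 1) * 1 ≤ (M - 1) * F := Nat.mul_le_mul_left _ hF1
        have h6 : (M - 1) * 1 ≤ (M - 1) * k := Nat.mul_le_mul_left _ (by omega)
        omega
      · -- long interval with a gap : two escapes
        have hab' : a < b := by omega
        have heb : nth π b ≠ some Sym.e := by
          intro hc'
          obtain ⟨w, hwR, hwe⟩ := hgap
          have hw2 := h2R w hwR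
          have hwb : w ≤ b := by rw [hR, Finset.mem_Icc] at hwR; omega
          have h2e := two_e hwe hc' (by omega)
          rcases C.hcase with ⟨he, hn⟩ | ⟨he, hn⟩ | ⟨he, hn⟩ <;> omega
        have heb1 : nth π (b+1) ≠ some Sym.e := by
          intro hc'
          obtain ⟨w, hwR, hwe⟩ := hgap
          have hw2 := h2R w hwR
          have hwb : w ≤ b := by rw [hR, Finset.mem_Icc] at hwR; omega
          have h2e := two_e hwe hc' (by omega)
          rcases C.hcase with ⟨he, hn⟩ | ⟨he, hn⟩ | ⟨he, hn⟩ <;> omega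
        have hF2 := K1de C hR h2a hbn hab' hgap heb heb1
        have hεn : π.length ≤ 2 * M := by
          rcases C.hcase with ⟨he, hn⟩ | ⟨he, hn⟩ | ⟨he, hn⟩ <;> omega
        refine le_trans ?_ (hmono (k + F) (le_refl _))
        have hsp : (M - 1) * (k + F) = (M-1) * k + (M-1) * F := by ring
        rw [hsp, hα1]
        have h5 : (M - 1) * 2 ≤ (M - 1) * F := Nat.mul_le_mul_left _ hF2
        have h6 : (M - 1) * 1 ≤ (M - 1) * k := Nat.mul_le_mul_left _ (by omega)
        omega
    · -- two gaps
      have hgap2 : ∃ w1 ∈ R, ∃ w2 ∈ R, w1 < w2 ∧ nth π (w1-1) = some Sym.e ∧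
          nth π (w2-1) = some Sym.e := by
        have h1 : 1 < α := by omega
        rw [hα, Finset.one_lt_card] at h1
        obtain ⟨u, hu, v, hv, huv⟩ := h1
        rw [Finset.mem_filter] at hu hv
        rcases lt_or_gt_of_ne huv with h | h
        · exact ⟨u, hu.1, v, hv.1, h, hu.2, hv.2⟩
        · exact ⟨v, hv.1, u, hu.1, h, hv.2, hu.2⟩
      obtain ⟨w1, hw1R, w2, hw2R, hww, hwe1, hwe2⟩ := hgap2
      have hε2 : π.count Sym.e = 2 := by omega
      have hnm : π.length = M + 1 := by
        rcases C.hcase with ⟨he, hn⟩ | ⟨he, hn⟩ | ⟨he, hn⟩ <;> omega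
      have hw1b : a ≤ w1 ∧ w1 ≤ b := by rw [hR, Finset.mem_Icc] at hw1R; exact hw1R
      have hw2b : a ≤ w2 ∧ w2 ≤ b := by rw [hR, Finset.mem_Icc] at hw2R; exact hw2R
      have hw1p := h2R w1 hw1R
      have hw2p := h2R w2 hw2R
      have hab' : a < b := by omega
      have heb : nth π b ≠ some Sym.e := fun hc' =>
        three_e C.hP hwe1 hwe2 hc' (by omega) (by omega) (by omega)
      have heb1 : nth π (b+1) ≠ some Sym.e := fun hc' =>
        three_e C.hP hwe1 hwe2 hc' (by omega) (by omega) (by omega)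
      have hF2 := K1de C hR h2a hbn hab' ⟨w2, hw2R, hwe2⟩ heb heb1
      refine le_trans ?_ (hmono (k + F) (le_refl _))
      have hsp : (M - 1) * (k + F) = (M-1) * k + (M-1) * F := by ring
      rw [hsp, hα2]
      have h5 : (M - 1) * 2 ≤ (M - 1) * F := Nat.mul_le_mul_left _ hF2
      have h6 : (M - 1) * 1 ≤ (M - 1) * k := Nat.mul_le_mul_left _ (by omega)
      omega
  · -- two intervals
    obtain ⟨a1, b1, a2, b2, h2a, h11, h12, h22, hR⟩ := interval_of_k2 h2R (by rw [← hk]; exact hk2)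
    have hb2R : b2 ∈ R := by rw [hR]; simp [Finset.mem_Icc]; omega
    have hbn : b2 ≤ π.length := (C.hRsub b2 hb2R).2
    have hdisj : Disjoint (Finset.Icc a1 b1) (Finset.Icc a2 b2) := by
      rw [Finset.disjoint_left]
      intro x hx hx'
      rw [Finset.mem_Icc] at hx hx'
      omega
    have hr : R.card = (b1 + 1 - a1) + (b2 + 1 - a2) := by
      rw [hR, Finset.card_union_of_disjoint hdisj, Nat.card_Icc, Nat.card_Icc]
    rcases (show α = 0 ∨ α = 1 ∨ α = 2 by omega) with hα0 | hα1 | hα2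
    · rcases (show a1 + a2 + 2 * M ≤ b1 + b2 + 3 ∨ b1 + b2 + 3 < a1 + a2 + 2 * M
          by omega) with hc | hc
      · have hε0 : π.count Sym.e = 0 := by
          rcases C.hcase with ⟨he, hn⟩ | ⟨he, hn⟩ | ⟨he, hn⟩ <;> omega
        have hn3 : π.length + 1 = 3 * M := by
          rcases C.hcase with ⟨he, hn⟩ | ⟨he, hn⟩ | ⟨he, hn⟩ <;> omega
        have hF1 := K2A C hR h2a h11 h12 h22 hbn hε0 hc
        refine le_trans ?_ (hmono 3 (by omega))
        rw [hα0]
        omega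
      · refine le_trans ?_ (hmono 2 (by omega))
        rw [hα0]
        omega
    · have hgap : ∃ w ∈ R, nth π (w-1) = some Sym.e := by
        have : 0 < α := by omega
        rw [hα, Finset.card_pos] at this
        obtain ⟨w, hw⟩ := this
        rw [Finset.mem_filter] at hw
        exact ⟨w, hw.1, hw.2⟩
      rcases (show a1 + a2 + M ≤ b1 + b2 + 2 ∨ b1 + b2 + 2 < a1 + a2 + M
          by omega) with hc | hc
      · have hε1 : π.count Sym.e = 1 := by
          rcases C.hcase with ⟨he, hn⟩ | ⟨he, hn⟩ | ⟨he, hn⟩ <;> omega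
        have hn2 : π.length = 2 * M := by
          rcases C.hcase with ⟨he, hn⟩ | ⟨he, hn⟩ | ⟨he, hn⟩ <;> omega
        have hF1 := K2B C hR h2a h11 h12 h22 hbn hε1 hgap hc
        refine le_trans ?_ (hmono (k + F) (le_refl _))
        have hsp : (M - 1) * (k + F) = (M-1) * k + (M-1) * F := by ring
        rw [hsp, hα1]
        have h5 : (M - 1) * 1 ≤ (M - 1) * F := Nat.mul_le_mul_left _ hF1
        have h6 : (M - 1) * 2 ≤ (M - 1) * k := Nat.mul_le_mul_left _ (by omega)
        omega
      · refine le_trans ?_ (hmono 2 (by omega))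
        rw [hα1]
        omega
    · have hgap2 : ∃ w1 ∈ R, ∃ w2 ∈ R, w1 < w2 ∧ nth π (w1-1) = some Sym.e ∧
          nth π (w2-1) = some Sym.e := by
        have h1 : 1 < α := by omega
        rw [hα, Finset.one_lt_card] at h1
        obtain ⟨u, hu, v, hv, huv⟩ := h1
        rw [Finset.mem_filter] at hu hv
        rcases lt_or_gt_of_ne huv with h | h
        · exact ⟨u, hu.1, v, hv.1, h, hu.2, hv.2⟩
        · exact ⟨v, hv.1, u, hu.1, h, hv.2, hu.2⟩
      have hε2 : π.count Sym.e = 2 := by omega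
      have hnm : π.length = M + 1 := by
        rcases C.hcase with ⟨he, hn⟩ | ⟨he, hn⟩ | ⟨he, hn⟩ <;> omega
      have hF1 := K2C C hR h2a h11 h12 h22 hbn hgap2
      refine le_trans ?_ (hmono (k + F) (le_refl _))
      have hsp : (M - 1) * (k + F) = (M-1) * k + (M-1) * F := by ring
      rw [hsp, hα2]
      have h5 : (M - 1) * 1 ≤ (M - 1) * F := Nat.mul_le_mul_left _ hF1
      have h6 : (M - 1) * 2 ≤ (M - 1) * k := Nat.mul_le_mul_left _ (by omega)
      omega
  · -- k ≥ 3
    have h1 : R.card + (M - 1) * α ≤ (M - 1) * 3 := by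
      have h2 : (M-1) * α ≤ (M-1) * π.count Sym.e := Nat.mul_le_mul_left _ hαε
      rcases C.hcase with ⟨he, hn⟩ | ⟨he, hn⟩ | ⟨he, hn⟩ <;>
        (rw [he] at h2; omega)
    calc R.card + (M - 1) * α ≤ (M - 1) * 3 := h1
      _ ≤ (M - 1) * (k + F) := hmono 3 (by omega)

/-! ### Counting edges -/

lemma first_one (hP : memPi π) (hne : nth π 1 ≠ some Sym.e) (hn : 1 ≤ π.length) :
    nth π 1 = some Sym.one := by
  obtain ⟨σ, hσ⟩ := nth_isSome (π := π) (j := 1) (le_refl _) hn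
  cases σ with
  | one => exact hσ
  | zero => exact absurd hσ hP.1
  | e => exact absurd hσ hne

def spineF (π : List Sym) : Finset (Sym2 ℕ) :=
  (Finset.Icc 1 π.length).image (fun j => s(j, j+1))

def extraF (π : List Sym) : Finset (Sym2 ℕ) :=
  ((Finset.Icc 1 π.length).filter (fun j => nth π j ≠ some Sym.e ∧
    (j = 1 → nth π 1 = some Sym.one))).image (fun j => s(bot π j, j+1))

lemma ESpec_eq_coe (π : List Sym) : ESpec π = ↑(spineF π ∪ extraF π) := by
  unfold ESpec spineF extraF extraOK
  ext x
  simp only [Set.mem_union, Set.mem_setOf_eq, Finset.coe_union, Finset.coe_image,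
    Set.mem_image, Finset.mem_coe, Finset.mem_filter, Finset.mem_Icc, Finset.coe_filter,
    Set.mem_setOf_eq]
  constructor
  · rintro (⟨j, h1, h2, h3⟩ | ⟨j, ⟨h1, h2, h3, h4⟩, h5⟩)
    · exact Or.inl ⟨j, ⟨h1, h2⟩, h3.symm⟩
    · exact Or.inr ⟨j, ⟨⟨h1, h2⟩, h3, h4⟩, h5.symm⟩
  · rintro (⟨j, ⟨h1, h2⟩, h3⟩ | ⟨j, ⟨⟨h1, h2⟩, h3, h4⟩, h5⟩)
    · exact Or.inl ⟨j, h1, h2, h3.symm⟩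
    · exact Or.inr ⟨j, ⟨h1, h2, h3, h4⟩, h5.symm⟩

lemma backEdges_subset {y z : ℕ} :
    backEdges π y z ⊆ ↑((spineF π ∪ extraF π).erase s(y, z)) := by
  intro x hx
  obtain ⟨hx1, hx2⟩ := hx
  rw [mem_edgeSet_iff] at hx1
  rw [Finset.coe_erase, Set.mem_diff]
  constructor
  · rw [← ESpec_eq_coe]
    exact hx1.1
  · intro hc
    rw [Set.mem_singleton_iff] at hc
    apply hx2
    subst hc
    intro v hv
    rw [Sym2.mem_iff] at hv
    simp only [Finset.mem_insert, Finset.mem_singleton]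
    rcases hv with rfl | rfl <;> tauto

lemma backEdges_finite {y z : ℕ} : (backEdges π y z).Finite :=
  Set.Finite.subset (Finset.finite_toSet _) backEdges_subset

lemma card_spineF : (spineF π).card ≤ π.length := by
  calc (spineF π).card ≤ (Finset.Icc 1 π.length).card := Finset.card_image_le
    _ = π.length := by rw [Nat.card_Icc]; omega

lemma card_extraF : (extraF π).card + π.count Sym.e ≤ π.length := by
  have h1 : (extraF π).card ≤ ((Finset.Icc 1 π.length).filter (fun j => nth π j ≠ some Sym.e ∧
      (j = 1 → nth π 1 = some Sym.one))).card := Finset.card_image_le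
  have h2 : ((Finset.Icc 1 π.length).filter (fun j => nth π j ≠ some Sym.e ∧
      (j = 1 → nth π 1 = some Sym.one))).card
      ≤ ((Finset.Icc 1 π.length).filter (fun j => ¬ (nth π j = some Sym.e))).card := by
    apply Finset.card_le_card
    intro j hj
    rw [Finset.mem_filter] at hj ⊢
    exact ⟨hj.1, hj.2.1⟩
  have h3 := Finset.card_filter_add_card_filter_not
    (s := Finset.Icc 1 π.length) (p := fun j => nth π j = some Sym.e)
  rw [count_e_eq] at h3
  rw [Nat.card_Icc] at h3
  omega

/-- Upper bound on the number of edges of the backward extension. -/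
lemma backEdges_upper {y z : ℕ} (hπ : π ≠ []) (hadj : (ladder π).Adj y z)
    (hz : z = π.length + 1) :
    (backEdges π y z).ncard + 1 + π.count Sym.e ≤ 2 * π.length := by
  have hyz : s(y, z) ∈ spineF π ∪ extraF π := by
    rw [← Finset.mem_coe, ← ESpec_eq_coe]
    exact (adj_iff.mp hadj).1
  have h1 : (backEdges π y z).ncard ≤ ((spineF π ∪ extraF π).erase s(y, z)).card := by
    rw [← Set.ncard_coe_finset]
    exact Set.ncard_le_ncard backEdges_subset (Finset.finite_toSet _)
  have h2 : ((spineF π ∪ extraF π).erase s(y, z)).card + 1 = (spineF π ∪ extraF π).card := by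
    rw [Finset.card_erase_of_mem hyz]
    have : 1 ≤ (spineF π ∪ extraF π).card := Finset.card_pos.mpr ⟨_, hyz⟩
    omega
  have h3 : (spineF π ∪ extraF π).card ≤ (spineF π).card + (extraF π).card :=
    Finset.card_union_le _ _
  have h4 := card_spineF (π := π)
  have h5 := card_extraF (π := π)
  omega

/-- The three families of edges meeting `R`. -/
def f1 (R : Finset ℕ) : Finset (Sym2 ℕ) :=
  (R ∪ R.image (fun w => w - 1)).image (fun j => s(j, j+1))

def f2 (π : List Sym) (R : Finset ℕ) : Finset (Sym2 ℕ) :=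
  (R.filter (fun w => ¬ (nth π (w-1) = some Sym.e))).image (fun w => s(bot π (w-1), w))

def f3 (π : List Sym) (R : Finset ℕ) : Finset (Sym2 ℕ) :=
  (escSet π R).image (fun j => s(bot π j, j+1))

lemma card_f1 (h2 : ∀ w ∈ R, 2 ≤ w) : (f1 R).card = R.card + (leftEnds R).card := by
  classical
  unfold f1
  rw [Finset.card_image_of_injective _ (fun j j' h => by
    rcases Sym2.eq_iff.mp h with ⟨h1, -⟩ | ⟨h1, h2⟩ <;> omega)]
  rw [← Finset.union_sdiff_self_eq_union, Finset.card_union_of_disjoint Finset.disjoint_sdiff]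
  congr 1
  have himg : R.image (fun w => w - 1) \ R = (leftEnds R).image (fun w => w - 1) := by
    ext x
    simp only [Finset.mem_sdiff, Finset.mem_image, leftEnds, Finset.mem_filter]
    constructor
    · rintro ⟨⟨w, hw, rfl⟩, hx⟩
      exact ⟨w, ⟨hw, hx⟩, rfl⟩
    · rintro ⟨w, ⟨hw, hx⟩, rfl⟩
      exact ⟨⟨w, hw, rfl⟩, hx⟩
  rw [himg, Finset.card_image_of_injOn]
  intro u hu v hv h
  unfold leftEnds at hu hv
  rw [Finset.coe_filter, Set.mem_setOf_eq] at hu hv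
  have := h2 u hu.1
  have := h2 v hv.1
  simp at h
  omega

lemma card_f2 (h2 : ∀ w ∈ R, 2 ≤ w) :
    (f2 π R).card + (R.filter (fun w => nth π (w-1) = some Sym.e)).card = R.card := by
  classical
  unfold f2
  rw [Finset.card_image_of_injOn (by
    intro u hu v hv h
    rw [Finset.coe_filter, Set.mem_setOf_eq] at hu hv
    have hu2 := h2 u hu.1
    have hv2 := h2 v hv.1
    have hbu : bot π (u-1) ≤ u - 2 := by
      have := bot_le (π := π) (j := u - 1) (by omega)
      omega
    have hbv : bot π (v-1) ≤ v - 2 := by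
      have := bot_le (π := π) (j := v - 1) (by omega)
      omega
    rcases Sym2.eq_iff.mp h with ⟨-, h1⟩ | ⟨h1, h1'⟩ <;> omega)]
  rw [add_comm]
  exact Finset.card_filter_add_card_filter_not _

lemma card_f3 : (f3 π R).card = (escSet π R).card := by
  classical
  unfold f3
  rw [Finset.card_image_of_injOn (by
    intro u hu v hv h
    unfold escSet at hu hv
    rw [Finset.coe_filter, Set.mem_setOf_eq] at hu hv
    rw [Finset.mem_Icc] at hu hv
    have hbu : bot π u ≤ u - 1 := bot_le (by omega)
    have hbv : bot π v ≤ v - 1 := bot_le (by omega)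
    rcases Sym2.eq_iff.mp h with ⟨-, h1⟩ | ⟨h1, h1'⟩ <;> omega)]

/-- Every edge in the families belongs to `backEdges` and has an endpoint in `R`. -/
lemma families_sub (C : Ctx M π y R) {z : ℕ} (hz : z = π.length + 1) :
    ↑(f1 R ∪ f2 π R ∪ f3 π R) ⊆ backEdges π y z ∧
      (∀ x ∈ f1 R ∪ f2 π R ∪ f3 π R, ∃ v ∈ R, v ∈ x) := by
  classical
  have hnM := C.hnM
  have hRI : ∀ w ∈ R, ¬ w ∈ ({0, 1, y, z} : Finset ℕ) := by
    intro w hw hc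
    obtain ⟨h1, h2⟩ := C.hRsub w hw
    simp only [Finset.mem_insert, Finset.mem_singleton] at hc
    rcases hc with rfl | rfl | rfl | rfl
    · omega
    · omega
    · exact C.hyR hw
    · omega
  have hmemR : ∀ x ∈ f1 R ∪ f2 π R ∪ f3 π R, ∃ v ∈ R, v ∈ x := by
    intro x hx
    simp only [Finset.mem_union, f1, f2, f3, Finset.mem_image] at hx
    rcases hx with (⟨j, hj, rfl⟩ | ⟨w, hw, rfl⟩) | ⟨j, hj, rfl⟩
    · rcases hj with hj | ⟨w, hw, hwj⟩
      · exact ⟨j, hj, by rw [Sym2.mem_iff]; left; rfl⟩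
      · have := C.hRsub w hw
        refine ⟨w, hw, by rw [Sym2.mem_iff]; right; omega⟩
    · rw [Finset.mem_filter] at hw
      exact ⟨w, hw.1, by rw [Sym2.mem_iff]; right; rfl⟩
    · unfold escSet at hj
      rw [Finset.mem_filter] at hj
      exact ⟨bot π j, hj.2.2.2.1, by rw [Sym2.mem_iff]; left; rfl⟩
  refine ⟨?_, hmemR⟩
  intro x hx
  rw [Finset.mem_coe] at hx
  have hspec : x ∈ ESpec π ∧ ¬ x.IsDiag := by
    simp only [Finset.mem_union, f1, f2, f3, Finset.mem_image] at hx
    rcases hx with (⟨j, hj, rfl⟩ | ⟨w, hw, rfl⟩) | ⟨j, hj, rfl⟩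
    · have hrange : 1 ≤ j ∧ j ≤ π.length := by
        rcases hj with hj | ⟨w, hw, hwj⟩
        · have := C.hRsub j hj; omega
        · have := C.hRsub w hw
          omega
      exact ⟨Or.inl ⟨j, hrange.1, hrange.2, rfl⟩, by rw [Sym2.mk_isDiag_iff]; omega⟩
    · rw [Finset.mem_filter] at hw
      obtain ⟨h1, h2⟩ := C.hRsub w hw.1
      have hOK : extraOK π (w - 1) := by
        refine ⟨by omega, by omega, hw.2, fun hj => ?_⟩
        exact first_one C.hP (by rw [← hj]; exact hw.2) (by omega)
      have hble : bot π (w-1) ≤ w - 2 := by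
        have := bot_le (π := π) (j := w - 1) (by omega)
        omega
      have he : w - 1 + 1 = w := by omega
      refine ⟨Or.inr ⟨w - 1, hOK, by rw [he]⟩, by rw [Sym2.mk_isDiag_iff]; omega⟩
    · unfold escSet at hj
      rw [Finset.mem_filter, Finset.mem_Icc] at hj
      have hOK : extraOK π j := ⟨hj.1.1, hj.1.2, hj.2.1, hj.2.2.1⟩
      have hble : bot π j ≤ j - 1 := bot_le hj.1.1
      exact ⟨Or.inr ⟨j, hOK, rfl⟩, by rw [Sym2.mk_isDiag_iff]; omega⟩
  constructor
  · rw [mem_edgeSet_iff]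
    exact hspec
  · intro hc
    obtain ⟨v, hvR, hvx⟩ := hmemR x hx
    exact hRI v hvR (hc v hvx)

/-- Pairwise disjointness of the families. -/
lemma families_disj (h2 : ∀ w ∈ R, 2 ≤ w) :
    Disjoint (f1 R) (f2 π R) ∧ Disjoint (f1 R) (f3 π R) ∧ Disjoint (f2 π R) (f3 π R) := by
  classical
  refine ⟨?_, ?_, ?_⟩
  · rw [Finset.disjoint_left]
    rintro x hx1 hx2
    simp only [f1, f2, Finset.mem_image] at hx1 hx2
    obtain ⟨j, hj, rfl⟩ := hx1
    obtain ⟨w, hw, hwx⟩ := hx2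
    rw [Finset.mem_filter] at hw
    have hw2 := h2 w hw.1
    have hble : bot π (w-1) ≤ w - 2 := by
      have := bot_le (π := π) (j := w - 1) (by omega)
      omega
    rcases Sym2.eq_iff.mp hwx with ⟨h1', h2'⟩ | ⟨h1', h2'⟩ <;> omega
  · rw [Finset.disjoint_left]
    rintro x hx1 hx2
    simp only [f1, f3, Finset.mem_image] at hx1 hx2
    obtain ⟨j, hj, rfl⟩ := hx1
    obtain ⟨i, hi, hix⟩ := hx2
    unfold escSet at hi
    rw [Finset.mem_filter, Finset.mem_Icc] at hi
    have hi2 := h2 _ hi.2.2.2.1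
    have hble : bot π i ≤ i - 1 := bot_le hi.1.1
    have h1i := hi.1.1
    rcases Sym2.eq_iff.mp hix with ⟨h1', h2'⟩ | ⟨h1', h2'⟩ <;> omega
  · rw [Finset.disjoint_left]
    rintro x hx1 hx2
    simp only [f2, f3, Finset.mem_image] at hx1 hx2
    obtain ⟨w, hw, rfl⟩ := hx1
    obtain ⟨i, hi, hix⟩ := hx2
    rw [Finset.mem_filter] at hw
    have hw2 := h2 w hw.1
    unfold escSet at hi
    rw [Finset.mem_filter, Finset.mem_Icc] at hi
    have hi4 : i + 1 ∉ R := hi.2.2.2.2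
    have hble : bot π i ≤ i - 1 := bot_le hi.1.1
    have h1i := hi.1.1
    have hbw : bot π (w - 1) ≤ w - 2 := by
      have := bot_le (π := π) (j := w - 1) (by omega)
      omega
    rcases Sym2.eq_iff.mp hix with ⟨h1', h2'⟩ | ⟨h1', h2'⟩
    · exact hi4 (by rw [h2']; exact hw.1)
    · omega

/-- Lower bound: edges meeting `R` are many, and avoid the subextension edges. -/
lemma edge_count_lower (C : Ctx M π y R) {z : ℕ} (hz : z = π.length + 1)
    (E : Set (Sym2 ℕ)) (s : Finset ℕ)
    (hE : E ⊆ backEdges π y z) (hEs : ∀ e ∈ E, ∀ x ∈ e, x ∈ s)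
    (hRs : ∀ w ∈ R, w ∉ s) :
    E.ncard + (2 * R.card + (leftEnds R).card + (escSet π R).card)
      ≤ (backEdges π y z).ncard + (R.filter (fun w => nth π (w-1) = some Sym.e)).card := by
  classical
  have h2 : ∀ w ∈ R, 2 ≤ w := fun w hw => (C.hRsub w hw).1
  obtain ⟨hsub, hmem⟩ := families_sub C hz
  obtain ⟨hd1, hd2, hd3⟩ := families_disj (π := π) h2
  set G := f1 R ∪ f2 π R ∪ f3 π R with hG
  have hcard : G.card + (R.filter (fun w => nth π (w-1) = some Sym.e)).card
      = 2 * R.card + (leftEnds R).card + (escSet π R).card := by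
    rw [hG, Finset.card_union_of_disjoint (by
        rw [Finset.disjoint_union_left]
        exact ⟨hd2, hd3⟩),
      Finset.card_union_of_disjoint hd1, card_f1 h2, card_f3]
    have := card_f2 (π := π) (R := R) h2
    omega
  have hEG : Disjoint E ↑G := by
    rw [Set.disjoint_left]
    intro x hxE hxG
    obtain ⟨v, hvR, hvx⟩ := hmem x hxG
    exact hRs v hvR (hEs x hxE v hvx)
  have hfinE : E.Finite := Set.Finite.subset backEdges_finite hE
  have hunion : (E ∪ ↑G).ncard = E.ncard + G.card := by
    rw [Set.ncard_union_eq hEG hfinE (Finset.finite_toSet _), Set.ncard_coe_finset]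
  have hle : (E ∪ ↑G).ncard ≤ (backEdges π y z).ncard := by
    apply Set.ncard_le_ncard _ backEdges_finite
    intro x hx
    rcases hx with hx | hx
    exacts [hE hx, hsub hx]
  omega

/-- The backward neighbours of the top vertex. -/
lemma z_nbr (hadj : (ladder π).Adj y (π.length + 1)) :
    y = π.length ∨ (extraOK π π.length ∧ y = bot π π.length) := by
  obtain ⟨hmem, hne⟩ := adj_iff.mp hadj
  rcases hmem with ⟨j, h1, h2, h3⟩ | ⟨j, hOK, h3⟩
  · rcases Sym2.eq_iff.mp h3 with ⟨e1, e2⟩ | ⟨e1, e2⟩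
    · left; omega
    · exfalso; omega
  · have hble := bot_le (π := π) hOK.1
    have hjn := hOK.2.1
    have h1j := hOK.1
    rcases Sym2.eq_iff.mp h3 with ⟨e1, e2⟩ | ⟨e1, e2⟩
    · right
      have hj : j = π.length := by omega
      subst hj
      exact ⟨hOK, e1⟩
    · exfalso; omega

set_option maxHeartbeats 1000000 in
theorem backward_extension_balanced' (M : ℕ) (hM : 3 ≤ M) (π : List Sym)
    (hπ : memB M π) (y z : ℕ) (h : IsOuterBoundaryEdge M π y z)
    (s : Finset ℕ) (E : Set (Sym2 ℕ))
    (hIs : ({0, 1, y, z} : Finset ℕ) ⊆ s) (hsv : s ⊆ Finset.range (π.length + 2))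
    (hE : E ⊆ backEdges π y z) (hEs : ∀ e ∈ E, ∀ x ∈ e, x ∈ s) :
    (E.ncard : ℝ) / ((s.card - ({0, 1, y, z} : Finset ℕ).card : ℕ) : ℝ) ≤
      ((backEdges π y z).ncard : ℝ) /
        ((π.length + 2 - ({0, 1, y, z} : Finset ℕ).card : ℕ) : ℝ) := by
  classical
  obtain ⟨hPmem, hnil, hfan, -⟩ := hπ
  obtain ⟨⟨hy0, hyz, hadj, hpy, -⟩, hz, hcase'⟩ := h
  subst hz
  have hcase : (π.count Sym.e = 0 ∧ π.length + 1 = 3 * M) ∨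
      (π.count Sym.e = 1 ∧ π.length = 2 * M) ∨
      (π.count Sym.e = 2 ∧ π.length = M + 1) := by
    rcases hcase' with ⟨h1, h2⟩ | ⟨h1, h2⟩ | ⟨h1, h2⟩
    · exact Or.inl ⟨h1, by omega⟩
    · exact Or.inr (Or.inl ⟨h1, h2⟩)
    · exact Or.inr (Or.inr ⟨h1, h2⟩)
  have hnM : M + 1 ≤ π.length := by
    rcases hcase with ⟨-, h'⟩ | ⟨-, h'⟩ | ⟨-, h'⟩ <;> omega
  have hynOK := z_nbr hadj
  have hpn : nth π π.length ≠ some Sym.e := by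
    rcases hynOK with rfl | ⟨hOK, -⟩
    · exact hpy
    · exact hOK.2.2.1
  have hyn : y = π.length ∨ y = bot π π.length := by
    rcases hynOK with h' | ⟨-, h'⟩
    · exact Or.inl h'
    · exact Or.inr h'
  set n := π.length with hn
  set R := ((Finset.Icc 2 n).erase y) \ s with hR
  have C : Ctx M π y R := by
    refine ⟨hM, hPmem, hfan, hcase, hyn, hpn, hpy, ?_, ?_⟩
    · intro w hw
      rw [hR, Finset.mem_sdiff, Finset.mem_erase, Finset.mem_Icc] at hw
      exact ⟨hw.1.2.1, hw.1.2.2⟩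
    · rw [hR, Finset.mem_sdiff, Finset.mem_erase]
      tauto
  have hy2 := C.ybounds
  have hIcard : ({0, 1, y, n + 1} : Finset ℕ).card = 4 := by
    rw [Finset.card_insert_of_notMem (by simp; omega),
      Finset.card_insert_of_notMem (by simp; omega),
      Finset.card_insert_of_notMem (by simp; omega),
      Finset.card_singleton]
  rw [hIcard]
  -- cardinality bookkeeping
  have hscard4 : 4 ≤ s.card := by
    rw [← hIcard]
    exact Finset.card_le_card hIs
  have hsI : ((Finset.Icc 2 n).erase y) ∩ s = s \ ({0, 1, y, n + 1} : Finset ℕ) := by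
    ext x
    rw [Finset.mem_inter, Finset.mem_erase, Finset.mem_Icc, Finset.mem_sdiff]
    simp only [Finset.mem_insert, Finset.mem_singleton]
    constructor
    · rintro ⟨⟨hx1, hx2, hx3⟩, hx4⟩
      refine ⟨hx4, ?_⟩
      push_neg
      exact ⟨by omega, by omega, hx1, by omega⟩
    · rintro ⟨hx1, hx2⟩
      push_neg at hx2
      have hxr : x < n + 2 := by
        have := hsv hx1
        rw [Finset.mem_range] at this
        omega
      exact ⟨⟨hx2.2.2.1, by omega, by omega⟩, hx1⟩
  have hrel : R.card + s.card = n + 2 := by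
    have hsplit := Finset.card_inter_add_card_sdiff ((Finset.Icc 2 n).erase y) s
    have hV0 : ((Finset.Icc 2 n).erase y).card = n - 2 := by
      rw [Finset.card_erase_of_mem (by rw [Finset.mem_Icc]; omega), Nat.card_Icc]
      omega
    have hsdI : (s \ ({0, 1, y, n + 1} : Finset ℕ)).card = s.card - 4 := by
      rw [Finset.card_sdiff_of_subset hIs, hIcard]
    rw [hsI, hsdI, hV0, ← hR] at hsplit
    omega
  -- the three estimates
  have hkey := keyIneq C
  have hlow := edge_count_lower C rfl E s hE hEs
    (fun w hw => (Finset.mem_sdiff.mp hw).2)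
  have hupp := backEdges_upper hnil hadj rfl
  have hrle := C.card_le
  -- integer arithmetic
  set EC := E.ncard with hEC
  set B := (backEdges π y (n+1)).ncard with hB
  set r := R.card with hr
  set kk := (leftEnds R).card with hkk
  set FF := (escSet π R).card with hFF
  set al := (R.filter (fun w => nth π (w-1) = some Sym.e)).card with hal
  have hfin : EC * (n - 2) ≤ B * (s.card - 4) := by
    have hs4 : (s.card - 4 : ℕ) = n - 2 - r := by omega
    rw [hs4]
    -- pass to integers
    have e1 : (EC : ℤ) + (2*r + kk + FF) ≤ B + al := by exact_mod_cast hlow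
    have e2 : (r : ℤ) + (M-1) * al ≤ (M-1) * (kk + FF) := by
      have := hkey
      have hM1 : ((M : ℤ) - 1) = ((M - 1 : ℕ) : ℤ) := by
        have : 1 ≤ M := by omega
        push_cast [this]
        omega
      rw [hM1]
      exact_mod_cast hkey
    have e3 : (B : ℤ) + 1 + π.count Sym.e ≤ 2 * n := by exact_mod_cast hupp
    have e4 : (n : ℤ) - 2 = (3 - π.count Sym.e) * (M - 1) := by
      rcases hcase with ⟨h1, h2⟩ | ⟨h1, h2⟩ | ⟨h1, h2⟩
      · have hnn : (n:ℤ) + 1 = 3 * (M:ℤ) := by exact_mod_cast h2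
        rw [h1]
        push_cast
        linarith
      · have hnn : (n:ℤ) = 2 * (M:ℤ) := by exact_mod_cast h2
        rw [h1]
        push_cast
        linarith
      · have hnn : (n:ℤ) = (M:ℤ) + 1 := by exact_mod_cast h2
        rw [h1]
        push_cast
        linarith
    have e5 : (0 : ℤ) ≤ 3 - π.count Sym.e := by
      have := hPmem.2.2.1
      omega
    have hMZ : (2 : ℤ) ≤ (M : ℤ) - 1 := by
      have : (3 : ℤ) ≤ (M : ℤ) := by exact_mod_cast hM
      omega
    have hnn2 : (0 : ℤ) ≤ (n : ℤ) - 2 := by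
      have : (4 : ℕ) ≤ n := by omega
      have h' : (4 : ℤ) ≤ (n : ℤ) := by exact_mod_cast this
      omega
    have e2' : (r : ℤ) ≤ ((M:ℤ) - 1) * ((kk : ℤ) + FF - al) := by
      have hring : ((M:ℤ) - 1) * ((kk : ℤ) + FF - al)
          = ((M:ℤ)-1) * ((kk:ℤ) + FF) - ((M:ℤ)-1) * al := by ring
      rw [hring]
      linarith [e2]
    have hgoal : (EC : ℤ) * ((n:ℤ) - 2) ≤ (B : ℤ) * ((n:ℤ) - 2 - r) := by
      have t1 : (EC:ℤ) ≤ (B:ℤ) + al - 2*r - kk - FF := by linarith [e1]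
      have t2 : (EC:ℤ) * ((n:ℤ) - 2) ≤ ((B:ℤ) + al - 2*r - kk - FF) * ((n:ℤ) - 2) :=
        mul_le_mul_of_nonneg_right t1 hnn2
      have t3 : (B:ℤ) * r ≤ (2*(n:ℤ) - 1 - π.count Sym.e) * r :=
        mul_le_mul_of_nonneg_right (by linarith [e3]) (by omega)
      have t4 : (r:ℤ) * (3 - π.count Sym.e)
          ≤ (((M:ℤ)-1) * ((kk:ℤ) + FF - al)) * (3 - π.count Sym.e) :=
        mul_le_mul_of_nonneg_right e2' e5
      have t5 : ((kk:ℤ) + FF - al) * ((n:ℤ) - 2)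
          = (((M:ℤ)-1) * ((kk:ℤ) + FF - al)) * (3 - π.count Sym.e) := by
        rw [e4]; ring
      nlinarith [t2, t3, t4, t5]
    have hfin' : ((EC * (n - 2) : ℕ) : ℤ) ≤ ((B * (n - 2 - r) : ℕ) : ℤ) := by
      push_cast
      rw [show ((n - 2 : ℕ) : ℤ) = (n:ℤ) - 2 by omega,
        show ((n - 2 - r : ℕ) : ℤ) = (n:ℤ) - 2 - r by omega]
      exact hgoal
    exact_mod_cast hfin'
  -- conclude in ℝ
  rcases eq_or_lt_of_le hscard4 with hs4 | hs4
  · rw [← hs4]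
    simp only [Nat.sub_self, Nat.cast_zero, div_zero]
    positivity
  · have hd1 : (0 : ℝ) < ((s.card - 4 : ℕ) : ℝ) := by
      have : 0 < s.card - 4 := by omega
      exact_mod_cast this
    have hd2 : (0 : ℝ) < ((n + 2 - 4 : ℕ) : ℝ) := by
      have : 0 < n + 2 - 4 := by omega
      exact_mod_cast this
    rw [div_le_div_iff₀ hd1 hd2]
    have hn2 : (n + 2 - 4 : ℕ) = n - 2 := by omega
    rw [hn2]
    exact_mod_cast hfin

/-- Let `M ≥ 3`, `π ∈ B_M`, and let `yz` be an outer boundary edge of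
`L_π`. Then the backward extension `B_{π,yz}` is balanced: its density `m_B` is at least
the density `m_K` of every subextension `K` (given by a vertex set `s ⊇ {0,1,y,z}` and an
edge set `E ⊆ E_B` of edges with both endpoints in `s`). -/
theorem backward_extension_balanced (M : ℕ) (hM : 3 ≤ M) (π : List Sym)
    (hπ : memB M π) (y z : ℕ) (h : IsOuterBoundaryEdge M π y z)
    (s : Finset ℕ) (E : Set (Sym2 ℕ))
    (hIs : ({0, 1, y, z} : Finset ℕ) ⊆ s) (hsv : s ⊆ Finset.range (π.length + 2))
    (hE : E ⊆ backEdges π y z) (hEs : ∀ e ∈ E, ∀ x ∈ e, x ∈ s) :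
    (E.ncard : ℝ) / ((s.card - ({0, 1, y, z} : Finset ℕ).card : ℕ) : ℝ) ≤
      ((backEdges π y z).ncard : ℝ) /
        ((π.length + 2 - ({0, 1, y, z} : Finset ℕ).card : ℕ) : ℝ) :=
  backward_extension_balanced' M hM π hπ y z h s E hIs hsv hE hEs

end TriangleRemoval
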